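/- arXiv:2101.08004 — 8 statements merged into one kernel-verified Lean document; each statement's English description precedes it below -/
import Mathlib

section
/- For every n ≥ 2, the graph K_2 ∨ T_2(n-2) (the join of an edge with the complete bipartite Turán graph on n-2 vertices) is B_{4,1}-free and contains exactly ⌊(n-2)²/4⌋ copies of K_4. -/
open SimpleGraph

/-- The number of copies of `K_r` in `G`. -/
noncomputable def cliqueCount {V : Type*} (G : SimpleGraph V) (r : ℕ) : ℕ :=
  Set.ncard {S : Finset V | G.IsNClique r S}

/-- `G` is `B_{r,s}`-free: no two copies of `K_r` in `G` share exactly `s` vertices. -/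
def BFree {V : Type*} [DecidableEq V] (G : SimpleGraph V) (r s : ℕ) : Prop :=
  ∀ S T : Finset V, G.IsNClique r S → G.IsNClique r T → (S ∩ T).card ≠ s

/-- The join of two graphs: all cross edges are present. -/
def SimpleGraph.join {α β : Type*} (G : SimpleGraph α) (H : SimpleGraph β) :
    SimpleGraph (α ⊕ β) where
  Adj x y :=
    match x, y with
    | Sum.inl a, Sum.inl b => G.Adj a b
    | Sum.inr a, Sum.inr b => H.Adj a b
    | Sum.inl _, Sum.inr _ => True
    | Sum.inr _, Sum.inl _ => True
  symm := ⟨by rintro (a | a) (b | b) h <;> simp_all [SimpleGraph.adj_comm]⟩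
  loopless := ⟨by rintro (a | a) h <;> simp_all⟩

/-- The specific graph `K_2 ∨ T_2(m)`. -/
abbrev Gj (m : ℕ) : SimpleGraph (Fin 2 ⊕ Fin m) :=
  (⊤ : SimpleGraph (Fin 2)).join (turanGraph m 2)

section Aux

variable {m : ℕ}

lemma join_adj_inr {v w : Fin m} :
    (Gj m).Adj (Sum.inr v) (Sum.inr w) ↔ (v : ℕ) % 2 ≠ (w : ℕ) % 2 := Iff.rfl

lemma pair_card (v : Fin m) :
    ({Sum.inl 0, Sum.inl (1 : Fin 2)} : Finset (Fin 2 ⊕ Fin m)).card = 2 := by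
  rw [Finset.card_pair (by simp)]

lemma filter_isRight_card_le (S : Finset (Fin 2 ⊕ Fin m)) (hS : (Gj m).IsNClique 4 S) :
    (S.filter (fun x => x.isRight)).card ≤ 2 := by
  classical
  have : (S.filter (fun x => x.isRight)).card ≤ (Finset.range 2).card := by
    apply Finset.card_le_card_of_injOn
      (fun x => match x with | Sum.inl _ => 0 | Sum.inr v => (v : ℕ) % 2)
    · rintro (a | v) hx
      · simp at hx
      · simp [Nat.mod_lt _ (by norm_num : (0:ℕ) < 2)]
    · rintro (a | v) hx (b | w) hy h
      · simp at hx
      · simp at hx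
      · simp at hy
      · simp only [Finset.coe_filter, Set.mem_setOf_eq] at hx hy
        by_contra hne
        exact (join_adj_inr.mp (hS.1 hx.1 hy.1 hne)) h
  simpa using this

lemma filter_split (S : Finset (Fin 2 ⊕ Fin m)) (hS : (Gj m).IsNClique 4 S) :
    (S.filter (fun x => x.isLeft)).card + (S.filter (fun x => x.isRight)).card = 4 := by
  classical
  have h := Finset.card_filter_add_card_filter_not
    (s := S) (p := fun x => x.isLeft)
  rw [hS.2] at h
  have he : S.filter (fun x => x.isRight) = S.filter (fun a => ¬ a.isLeft) :=
    Finset.filter_congr (by rintro (a | v) _ <;> simp)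
  rw [he]
  exact h

lemma filter_isLeft_eq (S : Finset (Fin 2 ⊕ Fin m)) (hS : (Gj m).IsNClique 4 S) :
    S.filter (fun x => x.isLeft) = {Sum.inl 0, Sum.inl (1 : Fin 2)} := by
  classical
  have hsub : S.filter (fun x => x.isLeft) ⊆ {Sum.inl 0, Sum.inl (1 : Fin 2)} := by
    rintro (a | v) hx
    · fin_cases a <;> simp
    · simp at hx
  have hsplit := filter_split S hS
  have hle := filter_isRight_card_le S hS
  have h2 : ({Sum.inl 0, Sum.inl (1 : Fin 2)} : Finset (Fin 2 ⊕ Fin m)).card = 2 := by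
    rw [Finset.card_pair (by simp)]
  exact Finset.eq_of_subset_of_card_le hsub (by omega)

lemma inl_mem (S : Finset (Fin 2 ⊕ Fin m)) (hS : (Gj m).IsNClique 4 S) (a : Fin 2) :
    Sum.inl a ∈ S := by
  classical
  have h := filter_isLeft_eq S hS
  have : Sum.inl a ∈ S.filter (fun x => x.isLeft) := by
    rw [h]; fin_cases a <;> simp
  exact (Finset.mem_filter.mp this).1

lemma clique_iff (S : Finset (Fin 2 ⊕ Fin m)) :
    (Gj m).IsNClique 4 S ↔ ∃ v w : Fin m, (v : ℕ) % 2 = 0 ∧ (w : ℕ) % 2 = 1 ∧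
      S = {Sum.inl 0, Sum.inl 1, Sum.inr v, Sum.inr w} := by
  classical
  constructor
  · intro hS
    have hL := filter_isLeft_eq S hS
    have hsplit := filter_split S hS
    have hcl : (S.filter (fun x => x.isLeft)).card = 2 := by
      rw [hL, Finset.card_pair (by simp)]
    have hcr : (S.filter (fun x => x.isRight)).card = 2 := by omega
    obtain ⟨x, y, hxy, hR⟩ := Finset.card_eq_two.mp hcr
    have hxS : x ∈ S.filter (fun x => x.isRight) := by rw [hR]; simp
    have hyS : y ∈ S.filter (fun x => x.isRight) := by rw [hR]; simp
    simp only [Finset.mem_filter] at hxS hyS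
    obtain ⟨v, rfl⟩ := Sum.isRight_iff.mp hxS.2
    obtain ⟨w, rfl⟩ := Sum.isRight_iff.mp hyS.2
    have hadj : (v : ℕ) % 2 ≠ (w : ℕ) % 2 :=
      join_adj_inr.mp (hS.1 hxS.1 hyS.1 hxy)
    have hSeq : S = {Sum.inl 0, Sum.inl 1, Sum.inr v, Sum.inr w} := by
      have hu : S = S.filter (fun x => x.isLeft) ∪ S.filter (fun x => x.isRight) := by
        ext z
        simp only [Finset.mem_union, Finset.mem_filter]
        constructor
        · intro hz; rcases z with a | u
          · exact Or.inl ⟨hz, rfl⟩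
          · exact Or.inr ⟨hz, rfl⟩
        · rintro (⟨hz, _⟩ | ⟨hz, _⟩) <;> exact hz
      rw [hu, hL, hR]
      ext z
      simp only [Finset.mem_union, Finset.mem_insert, Finset.mem_singleton]
      tauto
    have hv2 : (v : ℕ) % 2 = 0 ∨ (v : ℕ) % 2 = 1 := by omega
    rcases hv2 with hv | hv
    · exact ⟨v, w, hv, by omega, hSeq⟩
    · refine ⟨w, v, by omega, hv, ?_⟩
      rw [hSeq]
      ext z
      simp only [Finset.mem_insert, Finset.mem_singleton]
      tauto
  · rintro ⟨v, w, hv, hw, rfl⟩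
    have hvw : v ≠ w := by
      intro h; rw [h] at hv; omega
    constructor
    · rintro x hx y hy hne
      simp only [Finset.coe_insert, Finset.coe_singleton, Set.mem_insert_iff,
        Set.mem_singleton_iff] at hx hy
      rcases hx with rfl | rfl | rfl | rfl <;> rcases hy with rfl | rfl | rfl | rfl <;>
        first
        | exact absurd rfl hne
        | exact trivial
        | (show (⊤ : SimpleGraph (Fin 2)).Adj _ _; simp_all [Sum.inl.injEq])
        | (show (v : ℕ) % 2 ≠ (w : ℕ) % 2; omega)
        | (show (w : ℕ) % 2 ≠ (v : ℕ) % 2; omega)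
    · rw [Finset.card_insert_of_notMem (by simp [hvw]),
        Finset.card_insert_of_notMem (by simp),
        Finset.card_insert_of_notMem (by simpa using hvw),
        Finset.card_singleton]

lemma count_even_range (m : ℕ) :
    ((Finset.range m).filter (fun k => k % 2 = 0)).card = (m + 1) / 2 := by
  induction m with
  | zero => simp
  | succ m ih =>
    rw [Finset.range_add_one, Finset.filter_insert]
    by_cases h : m % 2 = 0
    · rw [if_pos h, Finset.card_insert_of_notMem (by simp), ih]; omega
    · rw [if_neg h, ih]; omega

lemma count_odd_range (m : ℕ) :
    ((Finset.range m).filter (fun k => k % 2 = 1)).card = m / 2 := by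
  induction m with
  | zero => simp
  | succ m ih =>
    rw [Finset.range_add_one, Finset.filter_insert]
    by_cases h : m % 2 = 1
    · rw [if_pos h, Finset.card_insert_of_notMem (by simp), ih]; omega
    · rw [if_neg h, ih]; omega

lemma count_fin (m c : ℕ) :
    (Finset.univ.filter (fun v : Fin m => (v : ℕ) % 2 = c)).card
      = ((Finset.range m).filter (fun k => k % 2 = c)).card := by
  classical
  have himg : (Finset.range m).filter (fun k => k % 2 = c)
      = (Finset.univ.filter (fun v : Fin m => (v : ℕ) % 2 = c)).image Fin.val := by
    ext k
    simp only [Finset.mem_filter, Finset.mem_range, Finset.mem_image, Finset.mem_univ,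
      true_and]
    constructor
    · rintro ⟨hk, hc⟩; exact ⟨⟨k, hk⟩, hc, rfl⟩
    · rintro ⟨v, hc, rfl⟩; exact ⟨v.isLt, hc⟩
  rw [himg, Finset.card_image_of_injective _ Fin.val_injective]

end Aux

lemma arith (m : ℕ) : (m + 1) / 2 * (m / 2) = m ^ 2 / 4 := by
  rcases Nat.even_or_odd m with ⟨k, rfl⟩ | ⟨k, rfl⟩
  · have h1 : (k + k + 1) / 2 = k := by omega
    have h2 : (k + k) / 2 = k := by omega
    have h3 : (k + k) ^ 2 = 4 * (k * k) := by ring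
    rw [h1, h2, h3, Nat.mul_div_cancel_left _ (by norm_num)]
  · have h1 : (2 * k + 1 + 1) / 2 = k + 1 := by omega
    have h2 : (2 * k + 1) / 2 = k := by omega
    have h3 : (2 * k + 1) ^ 2 = 4 * (k * k + k) + 1 := by ring
    have h4 : (4 * (k * k + k) + 1) / 4 = k * k + k := by omega
    rw [h1, h2, h3, h4]
    ring

/-- For `n ≥ 2`, the graph `K_2 ∨ T_2(n-2)` is `B_{4,1}`-free and contains exactly
`⌊(n-2)²/4⌋` copies of `K_4`. -/
theorem stmt1 (n : ℕ) (hn : 2 ≤ n) :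
    BFree ((⊤ : SimpleGraph (Fin 2)).join (turanGraph (n - 2) 2)) 4 1 ∧
    cliqueCount ((⊤ : SimpleGraph (Fin 2)).join (turanGraph (n - 2) 2)) 4 =
      (n - 2) ^ 2 / 4 := by
  classical
  set m := n - 2 with hm
  constructor
  · intro S T hS hT hcard
    have h0 : Sum.inl (0 : Fin 2) ∈ S ∩ T :=
      Finset.mem_inter.mpr ⟨inl_mem S hS 0, inl_mem T hT 0⟩
    have h1 : Sum.inl (1 : Fin 2) ∈ S ∩ T :=
      Finset.mem_inter.mpr ⟨inl_mem S hS 1, inl_mem T hT 1⟩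
    have hsub : ({Sum.inl 0, Sum.inl 1} : Finset (Fin 2 ⊕ Fin m)) ⊆ S ∩ T := by
      intro z hz
      simp only [Finset.mem_insert, Finset.mem_singleton] at hz
      rcases hz with rfl | rfl <;> assumption
    have h2 : (2 : ℕ) ≤ (S ∩ T).card := by
      calc (2:ℕ) = ({Sum.inl 0, Sum.inl 1} : Finset (Fin 2 ⊕ Fin m)).card :=
            (Finset.card_pair (by simp)).symm
        _ ≤ (S ∩ T).card := Finset.card_le_card hsub
    omega
  · rw [cliqueCount]
    have hset : {S : Finset (Fin 2 ⊕ Fin m) | (Gj m).IsNClique 4 S} =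
        (fun p : Fin m × Fin m =>
          ({Sum.inl 0, Sum.inl 1, Sum.inr p.1, Sum.inr p.2} : Finset (Fin 2 ⊕ Fin m))) ''
        {p : Fin m × Fin m | (p.1 : ℕ) % 2 = 0 ∧ (p.2 : ℕ) % 2 = 1} := by
      ext S
      simp only [Set.mem_setOf_eq, Set.mem_image, Prod.exists]
      rw [clique_iff]
      constructor
      · rintro ⟨v, w, hv, hw, rfl⟩; exact ⟨v, w, ⟨hv, hw⟩, rfl⟩
      · rintro ⟨v, w, ⟨hv, hw⟩, rfl⟩; exact ⟨v, w, hv, hw, rfl⟩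
    rw [hset, Set.ncard_image_of_injOn]
    · have hEO : {p : Fin m × Fin m | (p.1 : ℕ) % 2 = 0 ∧ (p.2 : ℕ) % 2 = 1} =
          ↑((Finset.univ.filter (fun v : Fin m => (v : ℕ) % 2 = 0)) ×ˢ
            (Finset.univ.filter (fun v : Fin m => (v : ℕ) % 2 = 1))) := by
        ext p
        simp [Finset.mem_product]
      rw [hEO, Set.ncard_coe_finset, Finset.card_product, count_fin, count_fin,
        count_even_range, count_odd_range, arith]
    · rintro ⟨v, w⟩ ⟨hv, hw⟩ ⟨v', w'⟩ ⟨hv', hw'⟩ h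
      simp only at h hv hw hv' hw'
      simp only [Prod.mk.injEq]
      have hv1 : Sum.inr v ∈ ({Sum.inl 0, Sum.inl 1, Sum.inr v', Sum.inr w'} :
          Finset (Fin 2 ⊕ Fin m)) := by
        rw [← h]; simp
      have hw1 : Sum.inr w ∈ ({Sum.inl 0, Sum.inl 1, Sum.inr v', Sum.inr w'} :
          Finset (Fin 2 ⊕ Fin m)) := by
        rw [← h]; simp
      simp only [Finset.mem_insert, Finset.mem_singleton, Sum.inr.injEq,
        reduceCtorEq, false_or] at hv1 hw1
      constructor
      · rcases hv1 with rfl | rfl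
        · rfl
        · omega
      · rcases hw1 with rfl | rfl
        · omega
        · rfl
end

section
/- Let G be a B_{4,1}-free graph, and let E_1 be the set of edges e of G such that there exist two copies K, K' of K_4 in G, both containing e, with E(K) ∩ E(K') = {e}. If G is also H_1-free and K_5-free, then E_1 is a matching in G, where H_1 is the 7-vertex graph consisting of a K_4 on {i,j,k,m} together with vertices h adjacent to i,j,k, vertex l adjacent to i,k,m, and vertex n adjacent to j,k,m. -/
open SimpleGraph

/-- `G` contains a (not necessarily induced) copy of `H`. -/
def ContainsCopy {α β : Type*} (G : SimpleGraph α) (H : SimpleGraph β) : Prop :=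
  ∃ f : β ↪ α, ∀ a b, H.Adj a b → G.Adj (f a) (f b)

/-- The 7-vertex graph `H₁` with vertices `h=0, i=1, j=2, k=3, l=4, m=5, n=6`,
whose copies of `K₄` are on `{h,i,j,k}`, `{i,j,k,m}`, `{i,k,l,m}`, `{j,k,m,n}`. -/
def H1 : SimpleGraph (Fin 7) :=
  SimpleGraph.fromRel (fun a b =>
    (a, b) ∈ [((0 : Fin 7), (1 : Fin 7)), (0, 2), (0, 3), (1, 2), (1, 3), (2, 3),
      (1, 5), (2, 5), (3, 5), (1, 4), (3, 4), (4, 5), (2, 6), (3, 6), (5, 6)])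

/-- The edge set of the complete graph on a vertex subset `S`. -/
def edgesOf {V : Type*} (S : Finset V) : Set (Sym2 V) :=
  {e | ¬ e.IsDiag ∧ ∀ x ∈ e, x ∈ S}

/-- The set `E₁` of edges `e` of `G` lying in two copies of `K₄` whose edge sets
intersect exactly in `{e}`. -/
def E1 {V : Type*} (G : SimpleGraph V) : Set (Sym2 V) :=
  {e | e ∈ G.edgeSet ∧ ∃ K K' : Finset V, G.IsNClique 4 K ∧ G.IsNClique 4 K' ∧
    e ∈ edgesOf K ∧ e ∈ edgesOf K' ∧ edgesOf K ∩ edgesOf K' = {e}}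

instance : DecidableRel H1.Adj := fun a b =>
  decidable_of_iff _ (SimpleGraph.fromRel_adj _ a b).symm

set_option linter.unusedSectionVars false
set_option linter.unusedVariables false

section Helpers

variable {V : Type*} [DecidableEq V] {G : SimpleGraph V}

lemma adj_of_clique {n : ℕ} {K : Finset V} (h : G.IsNClique n K) {x y : V}
    (hx : x ∈ K) (hy : y ∈ K) (hxy : x ≠ y) : G.Adj x y :=
  h.1 (Finset.mem_coe.2 hx) (Finset.mem_coe.2 hy) hxy

lemma exists_extra {K : Finset V} (h : K.card = 4) {a b c : V}
    (ha : a ∈ K) (hb : b ∈ K) (hc : c ∈ K) :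
    ∃ y, y ∈ K ∧ y ≠ a ∧ y ≠ b ∧ y ≠ c := by
  by_contra hcon
  push_neg at hcon
  have hsub : K ⊆ {a, b, c} := by
    intro z hz
    simp only [Finset.mem_insert, Finset.mem_singleton]
    by_cases h1 : z = a
    · exact Or.inl h1
    by_cases h2 : z = b
    · exact Or.inr (Or.inl h2)
    exact Or.inr (Or.inr (hcon z hz h1 h2))
  have h1 := Finset.card_le_card hsub
  have h2 : ({a, b, c} : Finset V).card ≤ 3 := by
    apply (Finset.card_insert_le _ _).trans
    have := Finset.card_insert_le b ({c} : Finset V)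
    simp at this ⊢
    omega
  omega

lemma exists_second (hB : BFree G 4 1) {K L : Finset V} (h4K : G.IsNClique 4 K)
    (h4L : G.IsNClique 4 L) {a : V} (haK : a ∈ K) (haL : a ∈ L) :
    ∃ s, s ∈ K ∧ s ∈ L ∧ s ≠ a := by
  by_contra hcon
  push_neg at hcon
  have heq : K ∩ L = {a} := by
    apply Finset.Subset.antisymm
    · intro z hz
      rw [Finset.mem_inter] at hz
      simp [hcon z hz.1 hz.2]
    · simp [Finset.mem_inter, haK, haL]
  exact hB K L h4K h4L (by rw [heq]; simp)

lemma no5 (hK5 : G.CliqueFree 5) {a b c d e : V}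
    (hab : G.Adj a b) (hac : G.Adj a c) (had : G.Adj a d) (hae : G.Adj a e)
    (hbc : G.Adj b c) (hbd : G.Adj b d) (hbe : G.Adj b e)
    (hcd : G.Adj c d) (hce : G.Adj c e) (hde : G.Adj d e) : False := by
  apply hK5 {a, b, c, d, e}
  constructor
  · intro x hx y hy hxy
    simp only [Finset.coe_insert, Set.mem_insert_iff, Finset.coe_singleton,
      Set.mem_singleton_iff] at hx hy
    rcases hx with rfl | rfl | rfl | rfl | rfl <;> rcases hy with rfl | rfl | rfl | rfl | rfl <;>
      first
        | exact absurd rfl hxy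
        | assumption
        | exact hab.symm | exact hac.symm | exact had.symm | exact hae.symm
        | exact hbc.symm | exact hbd.symm | exact hbe.symm
        | exact hcd.symm | exact hce.symm | exact hde.symm
  · rw [Finset.card_insert_of_notMem (by simp [hab.ne, hac.ne, had.ne, hae.ne]),
      Finset.card_insert_of_notMem (by simp [hbc.ne, hbd.ne, hbe.ne]),
      Finset.card_insert_of_notMem (by simp [hcd.ne, hce.ne]),
      Finset.card_insert_of_notMem (by simp [hde.ne]), Finset.card_singleton]

lemma hasH1 (hH : ¬ ContainsCopy G H1) (v0 v1 v2 v3 v4 v5 v6 : V)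
    (d01 : v0 ≠ v1) (d02 : v0 ≠ v2) (d03 : v0 ≠ v3) (d04 : v0 ≠ v4) (d05 : v0 ≠ v5)
    (d06 : v0 ≠ v6) (d12 : v1 ≠ v2) (d13 : v1 ≠ v3) (d14 : v1 ≠ v4) (d15 : v1 ≠ v5)
    (d16 : v1 ≠ v6) (d23 : v2 ≠ v3) (d24 : v2 ≠ v4) (d25 : v2 ≠ v5) (d26 : v2 ≠ v6)
    (d34 : v3 ≠ v4) (d35 : v3 ≠ v5) (d36 : v3 ≠ v6) (d45 : v4 ≠ v5) (d46 : v4 ≠ v6)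
    (d56 : v5 ≠ v6)
    (e01 : G.Adj v0 v1) (e02 : G.Adj v0 v2) (e03 : G.Adj v0 v3)
    (e12 : G.Adj v1 v2) (e13 : G.Adj v1 v3) (e23 : G.Adj v2 v3)
    (e15 : G.Adj v1 v5) (e25 : G.Adj v2 v5) (e35 : G.Adj v3 v5)
    (e14 : G.Adj v1 v4) (e34 : G.Adj v3 v4) (e45 : G.Adj v4 v5)
    (e26 : G.Adj v2 v6) (e36 : G.Adj v3 v6) (e56 : G.Adj v5 v6) : False := by
  apply hH
  refine ⟨⟨![v0, v1, v2, v3, v4, v5, v6], ?_⟩, ?_⟩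
  · intro i j hij
    fin_cases i <;> fin_cases j <;>
      first
        | rfl
        | exact absurd hij d01 | exact absurd hij d01.symm
        | exact absurd hij d02 | exact absurd hij d02.symm
        | exact absurd hij d03 | exact absurd hij d03.symm
        | exact absurd hij d04 | exact absurd hij d04.symm
        | exact absurd hij d05 | exact absurd hij d05.symm
        | exact absurd hij d06 | exact absurd hij d06.symm
        | exact absurd hij d12 | exact absurd hij d12.symm
        | exact absurd hij d13 | exact absurd hij d13.symm
        | exact absurd hij d14 | exact absurd hij d14.symm
        | exact absurd hij d15 | exact absurd hij d15.symm
        | exact absurd hij d16 | exact absurd hij d16.symm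
        | exact absurd hij d23 | exact absurd hij d23.symm
        | exact absurd hij d24 | exact absurd hij d24.symm
        | exact absurd hij d25 | exact absurd hij d25.symm
        | exact absurd hij d26 | exact absurd hij d26.symm
        | exact absurd hij d34 | exact absurd hij d34.symm
        | exact absurd hij d35 | exact absurd hij d35.symm
        | exact absurd hij d36 | exact absurd hij d36.symm
        | exact absurd hij d45 | exact absurd hij d45.symm
        | exact absurd hij d46 | exact absurd hij d46.symm
        | exact absurd hij d56 | exact absurd hij d56.symm
  · intro i j hij
    fin_cases i <;> fin_cases j <;>
      first
        | exact e01 | exact e01.symm | exact e02 | exact e02.symm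
        | exact e03 | exact e03.symm | exact e12 | exact e12.symm
        | exact e13 | exact e13.symm | exact e23 | exact e23.symm
        | exact e15 | exact e15.symm | exact e25 | exact e25.symm
        | exact e35 | exact e35.symm | exact e14 | exact e14.symm
        | exact e34 | exact e34.symm | exact e45 | exact e45.symm
        | exact e26 | exact e26.symm | exact e36 | exact e36.symm
        | exact e56 | exact e56.symm
        | exact absurd hij (by decide)

/-- The case where the second endpoint `c` of `f` lies in the clique `K` through `e`. -/
lemma case1 (hB : BFree G 4 1) (hH : ¬ ContainsCopy G H1) (hK5 : G.CliqueFree 5)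
    {a b c : V} (hab : a ≠ b) (hac : a ≠ c) (hbc : b ≠ c)
    {K K' L' : Finset V} (h4K : G.IsNClique 4 K) (h4K' : G.IsNClique 4 K')
    (h4L' : G.IsNClique 4 L')
    (haK : a ∈ K) (hbK : b ∈ K) (haK' : a ∈ K') (hbK' : b ∈ K')
    (haL' : a ∈ L') (hcL' : c ∈ L')
    (hKK' : ∀ z, z ∈ K → z ∈ K' → z = a ∨ z = b)
    (hcK : c ∈ K) (hcK' : c ∉ K') (hbL' : b ∉ L') : False := by
  obtain ⟨s, hsK', hsL', hsa⟩ := exists_second hB h4K' h4L' haK' haL'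
  have hsb : s ≠ b := fun h => hbL' (h ▸ hsL')
  have hsc : s ≠ c := fun h => hcK' (h ▸ hsK')
  obtain ⟨y, hyK, hya, hyb, hyc⟩ := exists_extra h4K.2 haK hbK hcK
  have hyK' : y ∉ K' := by
    intro h
    rcases hKK' y hyK h with h1 | h1
    exacts [hya h1, hyb h1]
  have hys : y ≠ s := fun h => hyK' (h ▸ hsK')
  by_cases hyL' : y ∈ L'
  · exact no5 hK5 (adj_of_clique h4K haK hbK hab) (adj_of_clique h4K haK hcK hac)
      (adj_of_clique h4K haK hyK hya.symm) (adj_of_clique h4K' haK' hsK' hsa.symm)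
      (adj_of_clique h4K hbK hcK hbc) (adj_of_clique h4K hbK hyK hyb.symm)
      (adj_of_clique h4K' hbK' hsK' hsb.symm) (adj_of_clique h4K hcK hyK hyc.symm)
      (adj_of_clique h4L' hcL' hsL' hsc.symm) (adj_of_clique h4L' hyL' hsL' hys)
  · obtain ⟨q, hqL', hqa, hqc, hqs⟩ := exists_extra h4L'.2 haL' hcL' hsL'
    obtain ⟨p, hpK', hpa, hpb, hps⟩ := exists_extra h4K'.2 haK' hbK' hsK'
    have hqb : q ≠ b := fun h => hbL' (h ▸ hqL')
    have hqy : q ≠ y := fun h => hyL' (h ▸ hqL')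
    have hpc : p ≠ c := fun h => hcK' (h ▸ hpK')
    have hpy : p ≠ y := fun h => hyK' (h ▸ (hpK' : p ∈ K'))
    by_cases hpq : p = q
    · subst hpq
      exact no5 hK5 (adj_of_clique h4K haK hbK hab) (adj_of_clique h4K haK hcK hac)
        (adj_of_clique h4K' haK' hsK' hsa.symm) (adj_of_clique h4K' haK' hpK' hpa.symm)
        (adj_of_clique h4K hbK hcK hbc) (adj_of_clique h4K' hbK' hsK' hsb.symm)
        (adj_of_clique h4K' hbK' hpK' hpb.symm) (adj_of_clique h4L' hcL' hsL' hsc.symm)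
        (adj_of_clique h4L' hcL' hqL' hpc.symm) (adj_of_clique h4K' hsK' hpK' hps.symm)
    · exact hasH1 hH y b c a p s q
        hyb hyc hya hpy.symm hys hqy.symm
        hbc hab.symm hpb.symm hsb.symm hqb.symm
        hac.symm hpc.symm hsc.symm hqc.symm
        hpa.symm hsa.symm hqa.symm
        hps hpq hqs.symm
        (adj_of_clique h4K hyK hbK hyb) (adj_of_clique h4K hyK hcK hyc)
        (adj_of_clique h4K hyK haK hya) (adj_of_clique h4K hbK hcK hbc)
        (adj_of_clique h4K hbK haK hab.symm) (adj_of_clique h4K hcK haK hac.symm)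
        (adj_of_clique h4K' hbK' hsK' hsb.symm) (adj_of_clique h4L' hcL' hsL' hsc.symm)
        (adj_of_clique h4K' haK' hsK' hsa.symm) (adj_of_clique h4K' hbK' hpK' hpb.symm)
        (adj_of_clique h4K' haK' hpK' hpa.symm) (adj_of_clique h4K' hpK' hsK' hps)
        (adj_of_clique h4L' hcL' hqL' hqc.symm) (adj_of_clique h4L' haL' hqL' hqa.symm)
        (adj_of_clique h4L' hsL' hqL' hqs.symm)

/-- The case where `c` avoids `K ∪ K'` and `b` avoids `L ∪ L'`. -/
lemma caseA (hB : BFree G 4 1) (hH : ¬ ContainsCopy G H1) (hK5 : G.CliqueFree 5)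
    {a b c : V} (hab : a ≠ b) (hac : a ≠ c) (hbc : b ≠ c)
    {K K' L L' : Finset V} (h4K : G.IsNClique 4 K) (h4K' : G.IsNClique 4 K')
    (h4L : G.IsNClique 4 L) (h4L' : G.IsNClique 4 L')
    (haK : a ∈ K) (hbK : b ∈ K) (haK' : a ∈ K') (hbK' : b ∈ K')
    (haL : a ∈ L) (hcL : c ∈ L) (haL' : a ∈ L') (hcL' : c ∈ L')
    (hKK' : ∀ z, z ∈ K → z ∈ K' → z = a ∨ z = b)
    (hLL' : ∀ z, z ∈ L → z ∈ L' → z = a ∨ z = c)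
    (hcK : c ∉ K) (hcK' : c ∉ K') (hbL : b ∉ L) (hbL' : b ∉ L') : False := by
  obtain ⟨s, hsK, hsL, hsa⟩ := exists_second hB h4K h4L haK haL
  obtain ⟨s', hs'K, hs'L', hs'a⟩ := exists_second hB h4K h4L' haK haL'
  obtain ⟨t, htK', htL, hta⟩ := exists_second hB h4K' h4L haK' haL
  obtain ⟨t', ht'K', ht'L', ht'a⟩ := exists_second hB h4K' h4L' haK' haL'
  have hsb : s ≠ b := fun h => hbL (h ▸ hsL)
  have hsc : s ≠ c := fun h => hcK (h ▸ hsK)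
  have hs'b : s' ≠ b := fun h => hbL' (h ▸ hs'L')
  have hs'c : s' ≠ c := fun h => hcK (h ▸ hs'K)
  have htb : t ≠ b := fun h => hbL (h ▸ htL)
  have htc : t ≠ c := fun h => hcK' (h ▸ htK')
  have ht'b : t' ≠ b := fun h => hbL' (h ▸ ht'L')
  have ht'c : t' ≠ c := fun h => hcK' (h ▸ ht'K')
  have hss' : s ≠ s' := by
    intro h
    rcases hLL' s hsL (h ▸ hs'L') with h1 | h1
    exacts [hsa h1, hsc h1]
  have htt' : t ≠ t' := by
    intro h
    rcases hLL' t htL (h ▸ ht'L') with h1 | h1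
    exacts [hta h1, htc h1]
  have hst : s ≠ t := by
    intro h
    rcases hKK' s hsK (h ▸ htK') with h1 | h1
    exacts [hsa h1, hsb h1]
  have hst' : s ≠ t' := by
    intro h
    rcases hKK' s hsK (h ▸ ht'K') with h1 | h1
    exacts [hsa h1, hsb h1]
  have hs't : s' ≠ t := by
    intro h
    rcases hKK' s' hs'K (h ▸ htK') with h1 | h1
    exacts [hs'a h1, hs'b h1]
  have hs't' : s' ≠ t' := by
    intro h
    rcases hKK' s' hs'K (h ▸ ht'K') with h1 | h1
    exacts [hs'a h1, hs'b h1]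
  exact hasH1 hH b s s' a t c t'
    hsb.symm hs'b.symm hab.symm htb.symm hbc ht'b.symm
    hss' hsa hst hsc hst'
    hs'a hs't hs'c hs't'
    hta.symm hac ht'a.symm
    htc htt' ht'c.symm
    (adj_of_clique h4K hbK hsK hsb.symm) (adj_of_clique h4K hbK hs'K hs'b.symm)
    (adj_of_clique h4K hbK haK hab.symm) (adj_of_clique h4K hsK hs'K hss')
    (adj_of_clique h4K hsK haK hsa) (adj_of_clique h4K hs'K haK hs'a)
    (adj_of_clique h4L hsL hcL hsc) (adj_of_clique h4L' hs'L' hcL' hs'c)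
    (adj_of_clique h4L haL hcL hac) (adj_of_clique h4L hsL htL hst)
    (adj_of_clique h4L haL htL hta.symm) (adj_of_clique h4L htL hcL htc)
    (adj_of_clique h4L' hs'L' ht'L' hs't') (adj_of_clique h4L' haL' ht'L' ht'a.symm)
    (adj_of_clique h4L' hcL' ht'L' ht'c.symm)

end Helpers

/-- If `G` is `{B_{4,1}, H₁, K₅}`-free, then `E₁` is a matching in `G`. -/
theorem stmt2 {V : Type*} [DecidableEq V] (G : SimpleGraph V)
    (hB : BFree G 4 1) (hH : ¬ ContainsCopy G H1) (hK : G.CliqueFree 5) :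
    ∀ e ∈ E1 G, ∀ f ∈ E1 G, e ≠ f → ∀ v : V, v ∈ e → v ∉ f := by
  rintro e he f hf hef v hve hvf
  obtain ⟨heE, K, K', h4K, h4K', heK, heK', hKK'⟩ := he
  obtain ⟨hfE, L, L', h4L, h4L', hfL, hfL', hLL'⟩ := hf
  obtain ⟨b, rfl⟩ := Sym2.mem_iff_exists.1 hve
  obtain ⟨c, rfl⟩ := Sym2.mem_iff_exists.1 hvf
  have hab : G.Adj v b := G.mem_edgeSet.1 heE
  have hac : G.Adj v c := G.mem_edgeSet.1 hfE
  have hvb : v ≠ b := hab.ne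
  have hvc : v ≠ c := hac.ne
  have hbc : b ≠ c := fun h => hef (by rw [h])
  have hvmem : ∀ x, x ∈ s(v, x) := fun x => Sym2.mem_mk_right v x
  have hvK : v ∈ K := heK.2 v (Sym2.mem_mk_left v b)
  have hbK : b ∈ K := heK.2 b (hvmem b)
  have hvK' : v ∈ K' := heK'.2 v (Sym2.mem_mk_left v b)
  have hbK' : b ∈ K' := heK'.2 b (hvmem b)
  have hvL : v ∈ L := hfL.2 v (Sym2.mem_mk_left v c)
  have hcL : c ∈ L := hfL.2 c (hvmem c)
  have hvL' : v ∈ L' := hfL'.2 v (Sym2.mem_mk_left v c)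
  have hcL' : c ∈ L' := hfL'.2 c (hvmem c)
  have inter_aux : ∀ (A B : Finset V) (x y : V), x ≠ y →
      edgesOf A ∩ edgesOf B = {s(x, y)} → x ∈ A → x ∈ B →
      ∀ z, z ∈ A → z ∈ B → z = x ∨ z = y := by
    intro A B x y hxy hAB hxA hxB z hzA hzB
    by_contra hcon
    push_neg at hcon
    have hmem : s(x, z) ∈ edgesOf A ∩ edgesOf B := by
      constructor
      · refine ⟨fun h => hcon.1 (Sym2.mk_isDiag_iff.1 h).symm, fun w hw => ?_⟩
        rcases Sym2.mem_iff.1 hw with rfl | rfl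
        exacts [hxA, hzA]
      · refine ⟨fun h => hcon.1 (Sym2.mk_isDiag_iff.1 h).symm, fun w hw => ?_⟩
        rcases Sym2.mem_iff.1 hw with rfl | rfl
        exacts [hxB, hzB]
    rw [hAB, Set.mem_singleton_iff] at hmem
    rcases Sym2.eq_iff.1 hmem with ⟨_, h2⟩ | ⟨h1, h2⟩
    · exact hcon.2 h2
    · exact hxy h1
  have hKKi : ∀ z, z ∈ K → z ∈ K' → z = v ∨ z = b :=
    inter_aux K K' v b hvb hKK' hvK hvK'
  have hLLi : ∀ z, z ∈ L → z ∈ L' → z = v ∨ z = c :=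
    inter_aux L L' v c hvc hLL' hvL hvL'
  by_cases hcKK : c ∈ K ∨ c ∈ K'
  · have hbnot : b ∉ L ∨ b ∉ L' := by
      by_contra h
      push_neg at h
      rcases hLLi b h.1 h.2 with h1 | h1
      exacts [hvb h1.symm, hbc h1]
    rcases hcKK with hcK | hcK'
    · have hcK' : c ∉ K' := by
        intro h
        rcases hKKi c hcK h with h1 | h1
        exacts [hvc h1.symm, hbc h1.symm]
      rcases hbnot with hbL | hbL'
      · exact case1 hB hH hK hvb hvc hbc h4K h4K' h4L hvK hbK hvK' hbK' hvL hcL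
          hKKi hcK hcK' hbL
      · exact case1 hB hH hK hvb hvc hbc h4K h4K' h4L' hvK hbK hvK' hbK' hvL' hcL'
          hKKi hcK hcK' hbL'
    · have hcK : c ∉ K := by
        intro h
        rcases hKKi c h hcK' with h1 | h1
        exacts [hvc h1.symm, hbc h1.symm]
      have hKKi' : ∀ z, z ∈ K' → z ∈ K → z = v ∨ z = b := fun z h1 h2 => hKKi z h2 h1
      rcases hbnot with hbL | hbL'
      · exact case1 hB hH hK hvb hvc hbc h4K' h4K h4L hvK' hbK' hvK hbK hvL hcL
          hKKi' hcK' hcK hbL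
      · exact case1 hB hH hK hvb hvc hbc h4K' h4K h4L' hvK' hbK' hvK hbK hvL' hcL'
          hKKi' hcK' hcK hbL'
  · push_neg at hcKK
    by_cases hbLL : b ∈ L ∨ b ∈ L'
    · have hLLi' : ∀ z, z ∈ L' → z ∈ L → z = v ∨ z = c := fun z h1 h2 => hLLi z h2 h1
      rcases hbLL with hbL | hbL'
      · have hbL' : b ∉ L' := by
          intro h
          rcases hLLi b hbL h with h1 | h1
          exacts [hvb h1.symm, hbc h1]
        exact case1 hB hH hK hvc hvb hbc.symm h4L h4L' h4K hvL hcL hvL' hcL' hvK hbK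
          hLLi hbL hbL' hcKK.1
      · have hbL : b ∉ L := by
          intro h
          rcases hLLi b h hbL' with h1 | h1
          exacts [hvb h1.symm, hbc h1]
        exact case1 hB hH hK hvc hvb hbc.symm h4L' h4L h4K hvL' hcL' hvL hcL hvK hbK
          hLLi' hbL' hbL hcKK.1
    · push_neg at hbLL
      exact caseA hB hH hK hvb hvc hbc h4K h4K' h4L h4L' hvK hbK hvK' hbK'
        hvL hcL hvL' hcL' hKKi hLLi hcKK.1 hcKK.2 hbLL.1 hbLL.2
end

section
/- Let G be a {B_{4,1}, H_1, K_5}-free graph in which every edge lies in at least one copy of K_4, and let E_1 be the set of edges lying in two copies of K_4 whose edge sets intersect only in that edge. Then for every copy K of K_4 in G and every edge uv ∈ E_1, the intersection |V(K) ∩ {u,v}| is not equal to 1. -/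
open SimpleGraph

lemma aux3 {V : Type*} [DecidableEq V] {G : SimpleGraph V}
    (hH : ¬ ContainsCopy G H1) (hK5 : G.CliqueFree 5) (hBf : BFree G 4 1)
    {K A B : Finset V} (hKcl : G.IsNClique 4 K)
    (hAcl : G.IsNClique 4 A) (hBcl : G.IsNClique 4 B)
    {u v : V} (hne : u ≠ v)
    (huA : u ∈ A) (hvA : v ∈ A) (huB : u ∈ B) (hvB : v ∈ B)
    (hABuv : ∀ w, w ∈ A → w ∈ B → w = u ∨ w = v)
    (huK : u ∈ K) (hvK : v ∉ K) : False := by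
  have adjK : ∀ {x y : V}, x ∈ K → y ∈ K → x ≠ y → G.Adj x y :=
    fun hx hy h => hKcl.isClique (Finset.mem_coe.mpr hx) (Finset.mem_coe.mpr hy) h
  have adjA : ∀ {x y : V}, x ∈ A → y ∈ A → x ≠ y → G.Adj x y :=
    fun hx hy h => hAcl.isClique (Finset.mem_coe.mpr hx) (Finset.mem_coe.mpr hy) h
  have adjB : ∀ {x y : V}, x ∈ B → y ∈ B → x ≠ y → G.Adj x y :=
    fun hx hy h => hBcl.isClique (Finset.mem_coe.mpr hx) (Finset.mem_coe.mpr hy) h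
  have hcardKA : 1 < (K ∩ A).card :=
    lt_of_le_of_ne (Finset.one_le_card.2 ⟨u, Finset.mem_inter.2 ⟨huK, huA⟩⟩)
      (Ne.symm (hBf K A hKcl hAcl))
  obtain ⟨a, haKA, hau⟩ := Finset.exists_mem_ne hcardKA u
  obtain ⟨haK, haA⟩ := Finset.mem_inter.1 haKA
  have hcardKB : 1 < (K ∩ B).card :=
    lt_of_le_of_ne (Finset.one_le_card.2 ⟨u, Finset.mem_inter.2 ⟨huK, huB⟩⟩)
      (Ne.symm (hBf K B hKcl hBcl))
  obtain ⟨b, hbKB, hbu⟩ := Finset.exists_mem_ne hcardKB u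
  obtain ⟨hbK, hbB⟩ := Finset.mem_inter.1 hbKB
  have hav : a ≠ v := fun h => hvK (h ▸ haK)
  have hbv : b ≠ v := fun h => hvK (h ▸ hbK)
  have haB : a ∉ B := fun h => by rcases hABuv a haA h with rfl | rfl <;> simp_all
  have hbA : b ∉ A := fun h => by rcases hABuv b h hbB with rfl | rfl <;> simp_all
  have hab : a ≠ b := fun h => hbA (h ▸ haA)
  by_cases h3A : ∃ w ∈ K ∩ A, w ≠ u ∧ w ≠ a
  · -- |K ∩ A| ≥ 3 : build a K₅ on (insert b A)
    obtain ⟨w, hwKA, hwu, hwa⟩ := h3A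
    obtain ⟨hwK, hwA⟩ := Finset.mem_inter.1 hwKA
    have hwv : w ≠ v := fun h => hvK (h ▸ hwK)
    have hsub : ({u, a, w, v} : Finset V) ⊆ A := by
      intro x hx
      simp only [Finset.mem_insert, Finset.mem_singleton] at hx
      rcases hx with rfl | rfl | rfl | rfl <;> assumption
    have hcard4 : ({u, a, w, v} : Finset V).card = 4 := by
      rw [show ({u, a, w, v} : Finset V) = insert u (insert a (insert w {v})) from rfl,
        Finset.card_insert_of_notMem (by simp [hau.symm, hwu.symm, hne]),
        Finset.card_insert_of_notMem (by simp [hwa.symm, hav]),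
        Finset.card_insert_of_notMem (by simp [hwv]), Finset.card_singleton]
    have hAeq : A = {u, a, w, v} :=
      (Finset.eq_of_subset_of_card_le hsub (by rw [hAcl.card_eq, hcard4])).symm
    refine hK5 (insert b A) ⟨?_, ?_⟩
    · rw [Finset.coe_insert]
      refine hAcl.isClique.insert fun x hx hxb => ?_
      have hxA : x ∈ A := hx
      rw [hAeq] at hxA
      simp only [Finset.mem_insert, Finset.mem_singleton] at hxA
      rcases hxA with rfl | rfl | rfl | rfl
      · exact adjK hbK huK hbu
      · exact adjK hbK haK (Ne.symm hab)
      · exact adjK hbK hwK (fun h => hbA (h ▸ hwA))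
      · exact adjB hbB hvB hbv
    · rw [Finset.card_insert_of_notMem hbA, hAcl.card_eq]
  by_cases h3B : ∃ w ∈ K ∩ B, w ≠ u ∧ w ≠ b
  · -- |K ∩ B| ≥ 3 : build a K₅ on (insert a B)
    obtain ⟨w, hwKB, hwu, hwb⟩ := h3B
    obtain ⟨hwK, hwB⟩ := Finset.mem_inter.1 hwKB
    have hwv : w ≠ v := fun h => hvK (h ▸ hwK)
    have hsub : ({u, b, w, v} : Finset V) ⊆ B := by
      intro x hx
      simp only [Finset.mem_insert, Finset.mem_singleton] at hx
      rcases hx with rfl | rfl | rfl | rfl <;> assumption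
    have hcard4 : ({u, b, w, v} : Finset V).card = 4 := by
      rw [show ({u, b, w, v} : Finset V) = insert u (insert b (insert w {v})) from rfl,
        Finset.card_insert_of_notMem (by simp [hbu.symm, hwu.symm, hne]),
        Finset.card_insert_of_notMem (by simp [hwb.symm, hbv]),
        Finset.card_insert_of_notMem (by simp [hwv]), Finset.card_singleton]
    have hBeq : B = {u, b, w, v} :=
      (Finset.eq_of_subset_of_card_le hsub (by rw [hBcl.card_eq, hcard4])).symm
    refine hK5 (insert a B) ⟨?_, ?_⟩
    · rw [Finset.coe_insert]
      refine hBcl.isClique.insert fun x hx hxa => ?_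
      have hxB : x ∈ B := hx
      rw [hBeq] at hxB
      simp only [Finset.mem_insert, Finset.mem_singleton] at hxB
      rcases hxB with rfl | rfl | rfl | rfl
      · exact adjK haK huK hau
      · exact adjK haK hbK hab
      · exact adjK haK hwK (fun h => haB (h ▸ hwB))
      · exact adjA haA hvA hav
    · rw [Finset.card_insert_of_notMem haB, hBcl.card_eq]
  -- both intersections have size exactly 2 : build a copy of H₁
  push_neg at h3A h3B
  have hKAeq : ∀ x, x ∈ K → x ∈ A → x = u ∨ x = a := by
    intro x hxK hxA
    by_cases hxu : x = u
    · exact Or.inl hxu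
    · exact Or.inr (h3A x (Finset.mem_inter.2 ⟨hxK, hxA⟩) hxu)
  have hKBeq : ∀ x, x ∈ K → x ∈ B → x = u ∨ x = b := by
    intro x hxK hxB
    by_cases hxu : x = u
    · exact Or.inl hxu
    · exact Or.inr (h3B x (Finset.mem_inter.2 ⟨hxK, hxB⟩) hxu)
  -- pick the remaining vertices c, a', b'
  have card3 : ∀ x y z : V, ({x, y, z} : Finset V).card ≤ 3 := by
    intro x y z
    have h1 := Finset.card_insert_le x ({y, z} : Finset V)
    have h2 := Finset.card_insert_le y ({z} : Finset V)
    simp only [Finset.card_singleton] at h2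
    omega
  have hc : ∃ c ∈ K, c ∉ ({u, a, b} : Finset V) := by
    by_contra hcon
    push_neg at hcon
    have h1 := Finset.card_le_card hcon
    rw [hKcl.card_eq] at h1
    have := card3 u a b
    omega
  obtain ⟨c, hcK, hcm⟩ := hc
  simp only [Finset.mem_insert, Finset.mem_singleton, not_or] at hcm
  obtain ⟨hcu, hca, hcb⟩ := hcm
  have ha' : ∃ a' ∈ A, a' ∉ ({u, v, a} : Finset V) := by
    by_contra hcon
    push_neg at hcon
    have h1 := Finset.card_le_card hcon
    rw [hAcl.card_eq] at h1
    have := card3 u v a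
    omega
  obtain ⟨a', ha'A, ha'm⟩ := ha'
  simp only [Finset.mem_insert, Finset.mem_singleton, not_or] at ha'm
  obtain ⟨ha'u, ha'v, ha'a⟩ := ha'm
  have hb' : ∃ b' ∈ B, b' ∉ ({u, v, b} : Finset V) := by
    by_contra hcon
    push_neg at hcon
    have h1 := Finset.card_le_card hcon
    rw [hBcl.card_eq] at h1
    have := card3 u v b
    omega
  obtain ⟨b', hb'B, hb'm⟩ := hb'
  simp only [Finset.mem_insert, Finset.mem_singleton, not_or] at hb'm
  obtain ⟨hb'u, hb'v, hb'b⟩ := hb'm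
  have hcA : c ∉ A := fun h => (hKAeq c hcK h).elim hcu hca
  have hcB : c ∉ B := fun h => (hKBeq c hcK h).elim hcu hcb
  have ha'K : a' ∉ K := fun h => (hKAeq a' h ha'A).elim ha'u ha'a
  have ha'B : a' ∉ B := fun h => (hABuv a' ha'A h).elim ha'u ha'v
  have hb'K : b' ∉ K := fun h => (hKBeq b' h hb'B).elim hb'u hb'b
  have hb'A : b' ∉ A := fun h => (hABuv b' h hb'B).elim hb'u hb'v
  have n01 : c ≠ a := hca
  have n02 : c ≠ b := hcb
  have n03 : c ≠ u := hcu
  have n04 : c ≠ a' := fun h => ha'K (h ▸ hcK)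
  have n05 : c ≠ v := fun h => hvK (h ▸ hcK)
  have n06 : c ≠ b' := fun h => hb'K (h ▸ hcK)
  have n12 : a ≠ b := hab
  have n13 : a ≠ u := hau
  have n14 : a ≠ a' := Ne.symm ha'a
  have n15 : a ≠ v := hav
  have n16 : a ≠ b' := fun h => hb'A (h ▸ haA)
  have n23 : b ≠ u := hbu
  have n24 : b ≠ a' := fun h => ha'B (h ▸ hbB)
  have n25 : b ≠ v := hbv
  have n26 : b ≠ b' := Ne.symm hb'b
  have n34 : u ≠ a' := Ne.symm ha'u
  have n35 : u ≠ v := hne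
  have n36 : u ≠ b' := Ne.symm hb'u
  have n45 : a' ≠ v := ha'v
  have n46 : a' ≠ b' := fun h => hb'A (h ▸ ha'A)
  have n56 : v ≠ b' := Ne.symm hb'v
  have e01 : G.Adj c a := adjK hcK haK n01
  have e02 : G.Adj c b := adjK hcK hbK n02
  have e03 : G.Adj c u := adjK hcK huK n03
  have e12 : G.Adj a b := adjK haK hbK n12
  have e13 : G.Adj a u := adjK haK huK n13
  have e23 : G.Adj b u := adjK hbK huK n23
  have e15 : G.Adj a v := adjA haA hvA n15
  have e25 : G.Adj b v := adjB hbB hvB n25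
  have e35 : G.Adj u v := adjA huA hvA n35
  have e14 : G.Adj a a' := adjA haA ha'A n14
  have e34 : G.Adj u a' := adjA huA ha'A n34
  have e45 : G.Adj a' v := adjA ha'A hvA n45
  have e26 : G.Adj b b' := adjB hbB hb'B n26
  have e36 : G.Adj u b' := adjB huB hb'B n36
  have e56 : G.Adj v b' := adjB hvB hb'B n56
  refine hH ⟨⟨![c, a, b, u, a', v, b'], ?_⟩, ?_⟩
  · intro p q hpq
    fin_cases p <;> fin_cases q <;>
      first
        | rfl
        | exact absurd hpq n01 | exact absurd hpq n01.symm
        | exact absurd hpq n02 | exact absurd hpq n02.symm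
        | exact absurd hpq n03 | exact absurd hpq n03.symm
        | exact absurd hpq n04 | exact absurd hpq n04.symm
        | exact absurd hpq n05 | exact absurd hpq n05.symm
        | exact absurd hpq n06 | exact absurd hpq n06.symm
        | exact absurd hpq n12 | exact absurd hpq n12.symm
        | exact absurd hpq n13 | exact absurd hpq n13.symm
        | exact absurd hpq n14 | exact absurd hpq n14.symm
        | exact absurd hpq n15 | exact absurd hpq n15.symm
        | exact absurd hpq n16 | exact absurd hpq n16.symm
        | exact absurd hpq n23 | exact absurd hpq n23.symm
        | exact absurd hpq n24 | exact absurd hpq n24.symm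
        | exact absurd hpq n25 | exact absurd hpq n25.symm
        | exact absurd hpq n26 | exact absurd hpq n26.symm
        | exact absurd hpq n34 | exact absurd hpq n34.symm
        | exact absurd hpq n35 | exact absurd hpq n35.symm
        | exact absurd hpq n36 | exact absurd hpq n36.symm
        | exact absurd hpq n45 | exact absurd hpq n45.symm
        | exact absurd hpq n46 | exact absurd hpq n46.symm
        | exact absurd hpq n56 | exact absurd hpq n56.symm
  · intro p q hpq
    fin_cases p <;> fin_cases q <;>
      first
        | exact absurd hpq (by decide)
        | exact e01 | exact e01.symm
        | exact e02 | exact e02.symm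
        | exact e03 | exact e03.symm
        | exact e12 | exact e12.symm
        | exact e13 | exact e13.symm
        | exact e23 | exact e23.symm
        | exact e15 | exact e15.symm
        | exact e25 | exact e25.symm
        | exact e35 | exact e35.symm
        | exact e14 | exact e14.symm
        | exact e34 | exact e34.symm
        | exact e45 | exact e45.symm
        | exact e26 | exact e26.symm
        | exact e36 | exact e36.symm
        | exact e56 | exact e56.symm

lemma mem_edgesOf {V : Type*} {S : Finset V} {x y : V} :
    s(x, y) ∈ edgesOf S ↔ x ≠ y ∧ x ∈ S ∧ y ∈ S := by
  constructor
  · rintro ⟨hd, hm⟩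
    exact ⟨fun h => hd (by simp [h]), hm x (by simp), hm y (by simp)⟩
  · rintro ⟨hxy, hx, hy⟩
    refine ⟨by simp [hxy], ?_⟩
    intro z hz
    rcases Sym2.mem_iff.1 hz with rfl | rfl
    exacts [hx, hy]

/-- If `G` is `{B_{4,1}, H₁, K₅}`-free and every edge of `G` lies in at least one
copy of `K₄`, then for every copy `K` of `K₄` in `G` and every edge `uv ∈ E₁`,
`|V(K) ∩ {u,v}| ≠ 1`. -/
theorem stmt3 {V : Type*} [DecidableEq V] (G : SimpleGraph V)
    (hB : BFree G 4 1) (hH : ¬ ContainsCopy G H1) (hK : G.CliqueFree 5)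
    (hedge : ∀ e ∈ G.edgeSet, ∃ K : Finset V, G.IsNClique 4 K ∧ e ∈ edgesOf K) :
    ∀ K : Finset V, G.IsNClique 4 K → ∀ u v : V, s(u, v) ∈ E1 G →
      (K ∩ {u, v}).card ≠ 1 := by
  intro K hKcl u v hE1 hcard
  obtain ⟨heuv, A, B, hAcl, hBcl, heA, heB, hI⟩ := hE1
  obtain ⟨hne, huA, hvA⟩ := mem_edgesOf.1 heA
  obtain ⟨-, huB, hvB⟩ := mem_edgesOf.1 heB
  have hABuv : ∀ w, w ∈ A → w ∈ B → w = u ∨ w = v := by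
    intro w hwA hwB
    by_cases hwu : w = u
    · exact Or.inl hwu
    · right
      have hm : s(u, w) ∈ edgesOf A ∩ edgesOf B :=
        ⟨mem_edgesOf.2 ⟨fun h => hwu h.symm, huA, hwA⟩,
         mem_edgesOf.2 ⟨fun h => hwu h.symm, huB, hwB⟩⟩
      rw [hI] at hm
      rcases Sym2.eq_iff.1 (Set.mem_singleton_iff.1 hm) with ⟨-, rfl⟩ | ⟨h1, -⟩
      · rfl
      · exact absurd h1 hne
  by_cases hu : u ∈ K <;> by_cases hv : v ∈ K
  · have : 1 < (K ∩ {u, v}).card :=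
      Finset.one_lt_card.2 ⟨u, by simp [hu], v, by simp [hv], hne⟩
    omega
  · exact aux3 hH hK hB hKcl hAcl hBcl hne huA hvA huB hvB hABuv hu hv
  · exact aux3 hH hK hB hKcl hAcl hBcl hne.symm hvA huA hvB huB
      (fun w hA hB => (hABuv w hA hB).symm) hv hu
  · have hempty : K ∩ {u, v} = ∅ := by
      ext x
      simp only [Finset.mem_inter, Finset.mem_insert, Finset.mem_singleton,
        Finset.notMem_empty, iff_false, not_and]
      rintro hxK (rfl | rfl) <;> [exact hu hxK; exact hv hxK]
    rw [hempty] at hcard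
    simp at hcard
end

section
/- Let G be a K_5-free graph and let M be a matching in G. Define an auxiliary graph H with vertex set M, where two matching edges e_1, e_2 are adjacent in H if and only if some copy of K_4 in G contains both e_1 and e_2. Then H is triangle-free, and consequently the number of copies of K_4 in G whose edge set contains two edges of M is at most ⌊|M|²/4⌋. -/
open SimpleGraph Finset

lemma my_mantel {W : Type*} [Fintype W] (H : SimpleGraph W) [DecidableRel H.Adj]
    (h : H.CliqueFree 3) : #H.edgeFinset ≤ Fintype.card W ^ 2 / 4 := by
  classical
  set n := Fintype.card W with hn
  have hdeg : ∀ d : H.Dart, H.degree d.fst + H.degree d.snd ≤ n := by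
    intro d
    have hdisj : Disjoint (H.neighborFinset d.fst) (H.neighborFinset d.snd) := by
      rw [Finset.disjoint_left]
      intro w hw1 hw2
      rw [mem_neighborFinset] at hw1 hw2
      exact h _ (is3Clique_triple_iff.2 ⟨d.adj, hw1, hw2⟩)
    calc H.degree d.fst + H.degree d.snd
        = #(H.neighborFinset d.fst ∪ H.neighborFinset d.snd) := by
          rw [card_union_of_disjoint hdisj, card_neighborFinset_eq_degree,
            card_neighborFinset_eq_degree]
      _ ≤ n := by simpa using Finset.card_le_univ _
  have hfst : ∑ d : H.Dart, H.degree d.fst = ∑ v, H.degree v ^ 2 := by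
    rw [← Finset.sum_fiberwise_of_maps_to (g := fun d : H.Dart => d.fst)
      (fun d _ => Finset.mem_univ _)]
    refine Finset.sum_congr rfl fun v _ => ?_
    have hv : ∑ d ∈ Finset.univ.filter (fun d : H.Dart => d.fst = v), H.degree d.fst
        = ∑ _d ∈ Finset.univ.filter (fun d : H.Dart => d.fst = v), H.degree v :=
      Finset.sum_congr rfl fun d hd => by rw [(Finset.mem_filter.1 hd).2]
    rw [hv, Finset.sum_const, H.dart_fst_fiber_card_eq_degree, smul_eq_mul, sq]
  have hsnd : ∑ d : H.Dart, H.degree d.snd = ∑ v, H.degree v ^ 2 := by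
    rw [← hfst]
    exact Fintype.sum_equiv (Function.Involutive.toPerm _ (fun d : H.Dart => d.symm_symm))
      _ _ (fun d => rfl)
  have hdartcard : Fintype.card H.Dart = 2 * #H.edgeFinset := H.dart_card_eq_twice_card_edges
  have hsum2 : 2 * ∑ v, H.degree v ^ 2 ≤ n * (2 * #H.edgeFinset) := by
    calc 2 * ∑ v, H.degree v ^ 2
        = ∑ d : H.Dart, (H.degree d.fst + H.degree d.snd) := by
          rw [Finset.sum_add_distrib, hfst, hsnd, two_mul]
      _ ≤ ∑ _d : H.Dart, n := Finset.sum_le_sum fun d _ => hdeg d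
      _ = n * (2 * #H.edgeFinset) := by
          rw [Finset.sum_const, smul_eq_mul, ← hdartcard, Finset.card_univ, mul_comm]
  have hcs : ((2 * #H.edgeFinset) ^ 2 : ℕ) ≤ n * ∑ v, H.degree v ^ 2 := by
    rw [← H.sum_degrees_eq_twice_card_edges]
    have := sq_sum_le_card_mul_sum_sq (s := (Finset.univ : Finset W))
      (f := fun v => (H.degree v : ℤ))
    have h2 : ((∑ v, H.degree v : ℕ) : ℤ) ^ 2 ≤ (n : ℤ) * ((∑ v, H.degree v ^ 2 : ℕ) : ℤ) := by
      push_cast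
      simpa [hn, Finset.card_univ] using this
    exact_mod_cast h2
  have hs : ∑ v, H.degree v ^ 2 ≤ n * #H.edgeFinset := by
    refine Nat.le_of_mul_le_mul_left ?_ (show 0 < 2 by norm_num)
    calc 2 * ∑ v, H.degree v ^ 2 ≤ n * (2 * #H.edgeFinset) := hsum2
      _ = 2 * (n * #H.edgeFinset) := by ring
  have key : 4 * #H.edgeFinset ≤ n ^ 2 := by
    rcases Nat.eq_zero_or_pos #H.edgeFinset with h0 | h0
    · simp [h0]
    · have : (2 * #H.edgeFinset) ^ 2 ≤ n * (n * #H.edgeFinset) :=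
        hcs.trans (Nat.mul_le_mul_left _ hs)
      have h4 : 4 * #H.edgeFinset * #H.edgeFinset ≤ n ^ 2 * #H.edgeFinset := by
        ring_nf; ring_nf at this; linarith
      exact Nat.le_of_mul_le_mul_right (by linarith) h0
  omega

/-- The auxiliary graph on the edges of a matching `M`: two matching edges are
adjacent iff they are distinct and some copy of `K₄` in `G` contains both. -/
def auxGraph {V : Type*} (G : SimpleGraph V) (M : Finset (Sym2 V)) :
    SimpleGraph {e // e ∈ M} :=
  SimpleGraph.fromRel (fun e f => ∃ K : Finset V, G.IsNClique 4 K ∧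
    (∀ x ∈ (e : Sym2 V), x ∈ K) ∧ (∀ x ∈ (f : Sym2 V), x ∈ K))

lemma auxGraph_adj {V : Type*} {G : SimpleGraph V} {M : Finset (Sym2 V)}
    {a b : {e // e ∈ M}} (h : (auxGraph G M).Adj a b) :
    a ≠ b ∧ ∃ K : Finset V, G.IsNClique 4 K ∧
      (∀ x ∈ (a : Sym2 V), x ∈ K) ∧ (∀ x ∈ (b : Sym2 V), x ∈ K) := by
  rw [auxGraph, fromRel_adj] at h
  refine ⟨h.1, ?_⟩
  rcases h.2 with ⟨K, h1, h2, h3⟩ | ⟨K, h1, h2, h3⟩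
  · exact ⟨K, h1, h2, h3⟩
  · exact ⟨K, h1, h3, h2⟩

/-- A `K₄` containing two distinct matching edges is exactly their union. -/
lemma k4_eq_union {V : Type*} {G : SimpleGraph V} {M : Finset (Sym2 V)}
    (hMG : ∀ e ∈ M, e ∈ G.edgeSet)
    (hM : ∀ e ∈ M, ∀ f ∈ M, e ≠ f → ∀ v : V, v ∈ e → v ∉ f)
    {e f : Sym2 V} (he : e ∈ M) (hf : f ∈ M) (hef : e ≠ f)
    {K : Finset V} (hK : G.IsNClique 4 K)
    (heK : ∀ x ∈ e, x ∈ K) (hfK : ∀ x ∈ f, x ∈ K) :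
    ∀ x, x ∈ K ↔ (x ∈ e ∨ x ∈ f) := by
  classical
  obtain ⟨⟨a1, a2⟩, ha⟩ := Quot.exists_rep e
  obtain ⟨⟨b1, b2⟩, hb⟩ := Quot.exists_rep f
  have hae : e = s(a1, a2) := ha.symm
  have hbf : f = s(b1, b2) := hb.symm
  have hadj_a : G.Adj a1 a2 := by have := hMG e he; rwa [hae, mem_edgeSet] at this
  have hadj_b : G.Adj b1 b2 := by have := hMG f hf; rwa [hbf, mem_edgeSet] at this
  have hdisj : ∀ x, x ∈ e → x ∉ f := fun x hx => hM e he f hf hef x hx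
  have h1f : a1 ∉ f := hdisj a1 (by rw [hae]; simp)
  have h2f : a2 ∉ f := hdisj a2 (by rw [hae]; simp)
  have hne : ∀ i ∈ ({a1, a2} : Finset V), ∀ j ∈ ({b1, b2} : Finset V), i ≠ j := by
    intro i hi j hj hij
    simp only [Finset.mem_insert, Finset.mem_singleton] at hi hj
    rcases hi with rfl | rfl <;> rcases hj with rfl | rfl <;>
      [exact h1f (by rw [hij, hbf]; simp); exact h1f (by rw [hij, hbf]; simp);
       exact h2f (by rw [hij, hbf]; simp); exact h2f (by rw [hij, hbf]; simp)]
  have hsub : ({a1, a2, b1, b2} : Finset V) ⊆ K := by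
    intro x hx
    simp only [Finset.mem_insert, Finset.mem_singleton] at hx
    rcases hx with rfl | rfl | rfl | rfl
    · exact heK _ (by rw [hae]; simp)
    · exact heK _ (by rw [hae]; simp)
    · exact hfK _ (by rw [hbf]; simp)
    · exact hfK _ (by rw [hbf]; simp)
  have hcard : ({a1, a2, b1, b2} : Finset V).card = 4 := by
    have h12 : a1 ≠ a2 := hadj_a.ne
    have h34 : b1 ≠ b2 := hadj_b.ne
    have h13 := hne a1 (by simp) b1 (by simp)
    have h14 := hne a1 (by simp) b2 (by simp)
    have h23 := hne a2 (by simp) b1 (by simp)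
    have h24 := hne a2 (by simp) b2 (by simp)
    rw [Finset.card_insert_of_notMem (by simp [h12, h13, h14]),
      Finset.card_insert_of_notMem (by simp [h23, h24]),
      Finset.card_insert_of_notMem (by simp [h34]), Finset.card_singleton]
  have hKeq : ({a1, a2, b1, b2} : Finset V) = K :=
    Finset.eq_of_subset_of_card_le hsub (by rw [hK.2, hcard])
  intro x
  constructor
  · intro hx
    rw [← hKeq] at hx
    simp only [Finset.mem_insert, Finset.mem_singleton] at hx
    rcases hx with rfl | rfl | rfl | rfl
    · exact Or.inl (by rw [hae]; simp)
    · exact Or.inl (by rw [hae]; simp)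
    · exact Or.inr (by rw [hbf]; simp)
    · exact Or.inr (by rw [hbf]; simp)
  · rintro (hx | hx)
    · exact heK _ hx
    · exact hfK _ hx

/-- If `G` is `K₅`-free and `M` is a matching in `G`, then the auxiliary graph `H`
on `M` is triangle-free, and the number of copies of `K₄` in `G` containing two
edges of `M` is at most `⌊|M|²/4⌋`. -/
theorem stmt4 {V : Type*} (G : SimpleGraph V) (hK : G.CliqueFree 5)
    (M : Finset (Sym2 V)) (hMG : ∀ e ∈ M, e ∈ G.edgeSet)
    (hM : ∀ e ∈ M, ∀ f ∈ M, e ≠ f → ∀ v : V, v ∈ e → v ∉ f) :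
    (auxGraph G M).CliqueFree 3 ∧
    Set.ncard {K : Finset V | G.IsNClique 4 K ∧ ∃ e ∈ M, ∃ f ∈ M, e ≠ f ∧
      (∀ x ∈ e, x ∈ K) ∧ (∀ x ∈ f, x ∈ K)} ≤ M.card ^ 2 / 4 := by
  classical
  have htf : (auxGraph G M).CliqueFree 3 := by
    intro s hs
    rw [is3Clique_iff] at hs
    obtain ⟨a, b, c, hab, hac, hbc, rfl⟩ := hs
    obtain ⟨hab', Kab, hKab, haKab, hbKab⟩ := auxGraph_adj hab
    obtain ⟨hac', Kac, hKac, haKac, hcKac⟩ := auxGraph_adj hac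
    obtain ⟨hbc', Kbc, hKbc, hbKbc, hcKbc⟩ := auxGraph_adj hbc
    have habv : (a : Sym2 V) ≠ (b : Sym2 V) := fun h => hab' (Subtype.ext h)
    have hacv : (a : Sym2 V) ≠ (c : Sym2 V) := fun h => hac' (Subtype.ext h)
    have hbcv : (b : Sym2 V) ≠ (c : Sym2 V) := fun h => hbc' (Subtype.ext h)
    obtain ⟨⟨c1, c2⟩, hcr⟩ := Quot.exists_rep (c : Sym2 V)
    have hc1 : c1 ∈ (c : Sym2 V) := by rw [← hcr]; exact Sym2.mem_mk_left _ _
    -- c1 is not in Kab since it is not in a nor b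
    have hc1a : c1 ∉ (a : Sym2 V) := fun h => hM _ c.2 _ a.2 hacv.symm c1 hc1 h
    have hc1b : c1 ∉ (b : Sym2 V) := fun h => hM _ c.2 _ b.2 hbcv.symm c1 hc1 h
    have hmemKab := k4_eq_union hMG hM a.2 b.2 habv hKab haKab hbKab
    have hc1Kab : c1 ∉ Kab := fun h => ((hmemKab c1).1 h).elim hc1a hc1b
    -- c1 is adjacent to every vertex of Kab
    have hadjc1 : ∀ x ∈ Kab, G.Adj c1 x := by
      intro x hx
      rcases (hmemKab x).1 hx with hxa | hxb
      · refine hKac.1 (hcKac _ hc1) (haKac _ hxa) ?_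
        exact fun h => hc1a (h ▸ hxa)
      · refine hKbc.1 (hcKbc _ hc1) (hbKbc _ hxb) ?_
        exact fun h => hc1b (h ▸ hxb)
    have h5 : G.IsNClique 5 (insert c1 Kab) := hKab.insert hadjc1
    exact hK _ h5
  refine ⟨htf, ?_⟩
  set S := {K : Finset V | G.IsNClique 4 K ∧ ∃ e ∈ M, ∃ f ∈ M, e ≠ f ∧
      (∀ x ∈ e, x ∈ K) ∧ (∀ x ∈ f, x ∈ K)} with hS
  rcases M.eq_empty_or_nonempty with hMe | ⟨e0, he0⟩
  · have : S = ∅ := by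
      ext K
      simp only [hS, Set.mem_setOf_eq, hMe, Finset.notMem_empty, Set.mem_empty_iff_false,
        iff_false]
      rintro ⟨-, e, he, -⟩
      exact he
    simp [this]
  · have hde : DecidableEq V := Classical.decEq V
    haveI : DecidableRel (auxGraph G M).Adj := Classical.decRel _
    haveI : Fintype {e // e ∈ M} := FinsetCoe.fintype M
    set H := auxGraph G M
    -- the map sending each K₄ to the corresponding edge of H
    have hφ : ∀ K ∈ S, ∃ p : {e // e ∈ M} × {e // e ∈ M},
        H.Adj p.1 p.2 ∧ (∀ x ∈ (p.1 : Sym2 V), x ∈ K) ∧ (∀ x ∈ (p.2 : Sym2 V), x ∈ K) := by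
      rintro K ⟨hK4, e, he, f, hf, hef, heK, hfK⟩
      refine ⟨(⟨e, he⟩, ⟨f, hf⟩), ?_, heK, hfK⟩
      rw [show H = auxGraph G M from rfl, auxGraph, fromRel_adj]
      exact ⟨fun h => hef (congrArg Subtype.val h), Or.inl ⟨K, hK4, heK, hfK⟩⟩
    haveI : Nonempty ({e // e ∈ M} × {e // e ∈ M}) := ⟨(⟨e0, he0⟩, ⟨e0, he0⟩)⟩
    choose! p hpadj hp1 hp2 using hφ
    have hmaps : ∀ K ∈ S, s((p K).1, (p K).2) ∈ (H.edgeFinset : Set (Sym2 {e // e ∈ M})) := by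
      intro K hKS
      rw [Finset.mem_coe, mem_edgeFinset, mem_edgeSet]
      exact hpadj K hKS
    have hinj : Set.InjOn (fun K => s((p K).1, (p K).2)) S := by
      intro K1 h1 K2 h2 heq
      obtain ⟨hK41, e1, he1, f1, hf1, hef1, heK1, hfK1⟩ := h1
      obtain ⟨hK42, e2, he2, f2, hf2, hef2, heK2, hfK2⟩ := h2
      have hadj1 := hpadj K1 ⟨hK41, e1, he1, f1, hf1, hef1, heK1, hfK1⟩
      have hadj2 := hpadj K2 ⟨hK42, e2, he2, f2, hf2, hef2, heK2, hfK2⟩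
      have hp11 := hp1 K1 ⟨hK41, e1, he1, f1, hf1, hef1, heK1, hfK1⟩
      have hp21 := hp2 K1 ⟨hK41, e1, he1, f1, hf1, hef1, heK1, hfK1⟩
      have hp12 := hp1 K2 ⟨hK42, e2, he2, f2, hf2, hef2, heK2, hfK2⟩
      have hp22 := hp2 K2 ⟨hK42, e2, he2, f2, hf2, hef2, heK2, hfK2⟩
      have hne1 : ((p K1).1 : Sym2 V) ≠ ((p K1).2 : Sym2 V) :=
        fun h => hadj1.ne (Subtype.ext h)
      have hne2 : ((p K2).1 : Sym2 V) ≠ ((p K2).2 : Sym2 V) :=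
        fun h => hadj2.ne (Subtype.ext h)
      have hm1 := k4_eq_union hMG hM (p K1).1.2 (p K1).2.2 hne1 hK41 hp11 hp21
      have hm2 := k4_eq_union hMG hM (p K2).1.2 (p K2).2.2 hne2 hK42 hp12 hp22
      simp only [Sym2.eq, Sym2.rel_iff', Prod.mk.injEq, Prod.swap_prod_mk] at heq
      ext x
      rw [hm1 x, hm2 x]
      rcases heq with ⟨h1, h2⟩ | ⟨h1, h2⟩ <;> rw [h1, h2] <;>
        first | exact Iff.rfl | exact or_comm
    calc S.ncard ≤ (H.edgeFinset : Set (Sym2 {e // e ∈ M})).ncard :=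
          Set.ncard_le_ncard_of_injOn _ hmaps hinj (H.edgeFinset : Finset _).finite_toSet
      _ = #H.edgeFinset := Set.ncard_coe_finset _
      _ ≤ Fintype.card {e // e ∈ M} ^ 2 / 4 := my_mantel H htf
      _ = M.card ^ 2 / 4 := by rw [Fintype.card_coe]
end

section
/- For integers n and real-valued consideration of the function f(x) = ⌊x²/16⌋ + ⌊(n-x)²/4⌋ on even integers x with 2 ≤ x ≤ n: f(x-2) ≥ f(x) whenever x ≤ (4n+1)/5, and f(x-2) ≤ f(x) whenever x ≥ (4n+9)/5. Consequently, for even n, max over even x in [2,n] of f(x) equals max{⌊(n-2)²/4⌋, ⌊n²/16⌋}, which equals ⌊(n-2)²/4⌋. -/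
private lemma sq_mod4 (a : ℕ) : a * a % 4 = a % 2 := by
  rcases Nat.even_or_odd a with ⟨c, rfl⟩ | ⟨c, rfl⟩
  · have h : (c + c) * (c + c) = 4 * (c * c) := by ring
    omega
  · have h : (2 * c + 1) * (2 * c + 1) = 4 * (c * c + c) + 1 := by ring
    omega

private lemma key1 (n x : ℕ) (h2 : 2 ≤ x) (hxn : x ≤ n) (hx : Even x)
    (hb : 5 * x ≤ 4 * n + 4) :
    x ^ 2 / 16 + (n - x) ^ 2 / 4 ≤ (x - 2) ^ 2 / 16 + (n - (x - 2)) ^ 2 / 4 := by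
  obtain ⟨a, rfl⟩ := hx
  have ha : 1 ≤ a := by omega
  obtain ⟨b, rfl⟩ : ∃ b, a = 1 + b := ⟨a - 1, by omega⟩
  have e1 : ((1 + b) + (1 + b)) ^ 2 = 4 * ((1 + b) * (1 + b)) := by ring
  have e2 : ((1 + b) + (1 + b)) - 2 = b + b := by omega
  have e3 : (b + b) ^ 2 = 4 * (b * b) := by ring
  have e4 : n - ((1 + b) + (1 + b) - 2) = (n - ((1 + b) + (1 + b))) + 2 := by omega
  have e5 : ((n - ((1 + b) + (1 + b))) + 2) ^ 2
      = (n - ((1 + b) + (1 + b))) * (n - ((1 + b) + (1 + b))) + 4 * (n - ((1 + b) + (1 + b))) + 4 := by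
    ring
  have e6 : (n - ((1 + b) + (1 + b))) ^ 2
      = (n - ((1 + b) + (1 + b))) * (n - ((1 + b) + (1 + b))) := by ring
  rw [e1, e4, e5, e6, e2, e3]
  have f1 : (1 + b) * (1 + b) = b * b + 2 * b + 1 := by ring
  have m1 := sq_mod4 (1 + b)
  have m2 := sq_mod4 b
  have m3 := sq_mod4 (n - ((1 + b) + (1 + b)))
  omega

private lemma key2 (n x : ℕ) (h2 : 2 ≤ x) (hxn : x ≤ n) (hx : Even x)
    (hb : 4 * n + 6 ≤ 5 * x) :
    (x - 2) ^ 2 / 16 + (n - (x - 2)) ^ 2 / 4 ≤ x ^ 2 / 16 + (n - x) ^ 2 / 4 := by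
  obtain ⟨a, rfl⟩ := hx
  have ha : 1 ≤ a := by omega
  obtain ⟨b, rfl⟩ : ∃ b, a = 1 + b := ⟨a - 1, by omega⟩
  have e1 : ((1 + b) + (1 + b)) ^ 2 = 4 * ((1 + b) * (1 + b)) := by ring
  have e2 : ((1 + b) + (1 + b)) - 2 = b + b := by omega
  have e3 : (b + b) ^ 2 = 4 * (b * b) := by ring
  have e4 : n - ((1 + b) + (1 + b) - 2) = (n - ((1 + b) + (1 + b))) + 2 := by omega
  have e5 : ((n - ((1 + b) + (1 + b))) + 2) ^ 2
      = (n - ((1 + b) + (1 + b))) * (n - ((1 + b) + (1 + b))) + 4 * (n - ((1 + b) + (1 + b))) + 4 := by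
    ring
  have e6 : (n - ((1 + b) + (1 + b))) ^ 2
      = (n - ((1 + b) + (1 + b))) * (n - ((1 + b) + (1 + b))) := by ring
  rw [e1, e4, e5, e6, e2, e3]
  have f1 : (1 + b) * (1 + b) = b * b + 2 * b + 1 := by ring
  have m1 := sq_mod4 (1 + b)
  have m2 := sq_mod4 b
  have m3 := sq_mod4 (n - ((1 + b) + (1 + b)))
  omega

private lemma claimL (n : ℕ) : ∀ x : ℕ, 2 ≤ x → x ≤ n → Even x → 5 * x ≤ 4 * n + 4 →
    x ^ 2 / 16 + (n - x) ^ 2 / 4 ≤ 2 ^ 2 / 16 + (n - 2) ^ 2 / 4 := by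
  intro x
  induction x using Nat.strong_induction_on with
  | _ x ih =>
    intro h2 hxn hx hb
    rcases eq_or_lt_of_le h2 with h | h
    · rw [← h]
    · have h4 : 4 ≤ x := by
        obtain ⟨a, rfl⟩ := hx; omega
      calc x ^ 2 / 16 + (n - x) ^ 2 / 4
          ≤ (x - 2) ^ 2 / 16 + (n - (x - 2)) ^ 2 / 4 := key1 n x h2 hxn hx hb
        _ ≤ 2 ^ 2 / 16 + (n - 2) ^ 2 / 4 := by
            apply ih (x - 2) (by omega) (by omega) (by omega)
            · obtain ⟨a, rfl⟩ := hx
              exact ⟨a - 1, by omega⟩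
            · omega

private lemma claimR (n : ℕ) (hn : Even n) : ∀ k x : ℕ, n - x ≤ k → 2 ≤ x → x ≤ n → Even x →
    4 * n + 6 ≤ 5 * x →
    x ^ 2 / 16 + (n - x) ^ 2 / 4 ≤ n ^ 2 / 16 + (n - n) ^ 2 / 4 := by
  intro k
  induction k with
  | zero =>
    intro x hk h2 hxn hx hb
    have : x = n := by omega
    rw [this]
  | succ k ih =>
    intro x hk h2 hxn hx hb
    rcases eq_or_lt_of_le hxn with h | h
    · rw [h]
    · have hx2 : x + 2 ≤ n := by
        obtain ⟨a, rfl⟩ := hx; obtain ⟨b, rfl⟩ := hn; omega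
      have hxe : Even (x + 2) := by obtain ⟨a, rfl⟩ := hx; exact ⟨a + 1, by omega⟩
      have step := key2 n (x + 2) (by omega) hx2 hxe (by omega)
      simp only [Nat.add_sub_cancel] at step
      calc x ^ 2 / 16 + (n - x) ^ 2 / 4
          ≤ (x + 2) ^ 2 / 16 + (n - (x + 2)) ^ 2 / 4 := step
        _ ≤ n ^ 2 / 16 + (n - n) ^ 2 / 4 := ih (x + 2) (by omega) (by omega) hx2 hxe (by omega)

private lemma maxeq (n : ℕ) (hn : 0 < n) (he : Even n) :
    max ((n - 2) ^ 2 / 4) (n ^ 2 / 16) = (n - 2) ^ 2 / 4 := by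
  apply max_eq_left
  obtain ⟨m, rfl⟩ := he
  have e1 : (m + m) ^ 2 = 4 * (m * m) := by ring
  have e2 : (m + m) - 2 = 2 * (m - 1) := by omega
  have e3 : (2 * (m - 1)) ^ 2 = 4 * ((m - 1) * (m - 1)) := by ring
  have f1 : (m - 1) * (m - 1) + 2 * m = m * m + 1 := by
    obtain ⟨b, rfl⟩ : ∃ b, m = 1 + b := ⟨m - 1, by omega⟩
    simp only [Nat.add_sub_cancel_left]
    ring
  have f2 : 4 * m ≤ m * m + 4 := by nlinarith
  have m1 := sq_mod4 m
  rw [e1, e2, e3]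
  omega

/-- Properties of `f(x) = ⌊x²/16⌋ + ⌊(n-x)²/4⌋` on even integers `2 ≤ x ≤ n`
(natural number division is floor division): `f` increases when `x` decreases by `2`
for `x ≤ (4n+1)/5`, decreases for `x ≥ (4n+9)/5`, and for even `n` its maximum is
`max{⌊(n-2)²/4⌋, ⌊n²/16⌋} = ⌊(n-2)²/4⌋`. -/
theorem stmt5 (n : ℕ) (hn : 0 < n) :
    (∀ x : ℕ, 2 ≤ x → x ≤ n → Even x → 5 * x ≤ 4 * n + 1 →
      x ^ 2 / 16 + (n - x) ^ 2 / 4 ≤ (x - 2) ^ 2 / 16 + (n - (x - 2)) ^ 2 / 4) ∧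
    (∀ x : ℕ, 2 ≤ x → x ≤ n → Even x → 4 * n + 9 ≤ 5 * x →
      (x - 2) ^ 2 / 16 + (n - (x - 2)) ^ 2 / 4 ≤ x ^ 2 / 16 + (n - x) ^ 2 / 4) ∧
    (Even n →
      IsGreatest {m | ∃ x : ℕ, 2 ≤ x ∧ x ≤ n ∧ Even x ∧
          x ^ 2 / 16 + (n - x) ^ 2 / 4 = m}
        (max ((n - 2) ^ 2 / 4) (n ^ 2 / 16)) ∧
      max ((n - 2) ^ 2 / 4) (n ^ 2 / 16) = (n - 2) ^ 2 / 4) := by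
  refine ⟨fun x h2 hxn hx hb => key1 n x h2 hxn hx (by omega),
    fun x h2 hxn hx hb => key2 n x h2 hxn hx (by omega), fun he => ?_⟩
  have hme := maxeq n hn he
  have hn2 : 2 ≤ n := by obtain ⟨m, rfl⟩ := he; omega
  constructor
  · constructor
    · rw [hme]
      exact ⟨2, le_refl 2, hn2, ⟨1, rfl⟩, by norm_num⟩
    · rintro m ⟨x, h2, hxn, hx, rfl⟩
      rw [hme]
      have hcov : 5 * x ≤ 4 * n + 4 ∨ 4 * n + 6 ≤ 5 * x := by
        obtain ⟨a, rfl⟩ := hx; obtain ⟨b, rfl⟩ := he; omega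
      rcases hcov with hc | hc
      · have := claimL n x h2 hxn hx hc
        have e : (2 : ℕ) ^ 2 / 16 = 0 := by norm_num
        omega
      · have := claimR n he (n - x) x (le_refl _) h2 hxn hx hc
        have e : n - n = 0 := by omega
        rw [e] at this
        have hle : n ^ 2 / 16 ≤ (n - 2) ^ 2 / 4 :=
          hme ▸ le_max_right ((n - 2) ^ 2 / 4) (n ^ 2 / 16)
        simp at this
        omega
  · exact hme
end

section
/- Let r > s ≥ 1 with r ≥ 2s+1. Then the graph K_{s+1} ∨ T_{r-s-1}(n-s-1) is B_{r,s}-free, i.e., it contains no two copies of K_r sharing exactly s vertices. -/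
open SimpleGraph

lemma key_mem (r s m : ℕ) (hs : 1 ≤ s) (hr : 2 * s + 1 ≤ r)
    (S : Finset (Fin (s + 1) ⊕ Fin m))
    (hS : ((⊤ : SimpleGraph (Fin (s + 1))).join (turanGraph m (r - s - 1))).IsNClique r S)
    (a : Fin (s + 1)) : Sum.inl a ∈ S := by
  classical
  set k := r - s - 1 with hk
  have hkpos : 0 < k := by omega
  set Sl := S.filter (fun x => x.isLeft) with hSl
  set Sr := S.filter (fun x => ¬ x.isLeft) with hSr
  have hcard : Sl.card + Sr.card = r := by
    rw [hSl, hSr, Finset.card_filter_add_card_filter_not, hS.2]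
  have hSrk : Sr.card ≤ k := by
    have h1 : Sr.card ≤ (Finset.range k).card := by
      apply Finset.card_le_card_of_injOn (fun x => match x with
        | Sum.inl _ => 0
        | Sum.inr b => (b : ℕ) % k)
      · intro x hx
        simp only [hSr, Finset.mem_coe, Finset.mem_filter] at hx
        match x with
        | Sum.inl c => simp at hx
        | Sum.inr b => simpa using Nat.mod_lt _ hkpos
      · intro x hx y hy hxy
        simp only [hSr, Finset.mem_coe, Finset.mem_filter] at hx hy
        match x, y with
        | Sum.inl c, _ => simp at hx
        | Sum.inr b, Sum.inl c => simp at hy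
        | Sum.inr b, Sum.inr c =>
          by_contra hne
          have hadj := hS.1 hx.1 hy.1 hne
          exact hadj hxy
    simpa using h1
  have hSlsub : Sl ⊆ Finset.univ.image (Sum.inl : Fin (s+1) → Fin (s+1) ⊕ Fin m) := by
    intro x hx
    simp only [hSl, Finset.mem_filter] at hx
    match x with
    | Sum.inl c => simp
    | Sum.inr b => simp at hx
  have himcard : (Finset.univ.image (Sum.inl : Fin (s+1) → Fin (s+1) ⊕ Fin m)).card = s + 1 := by
    rw [Finset.card_image_of_injective _ Sum.inl_injective]
    simp
  have hSleq : Sl = Finset.univ.image Sum.inl := by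
    apply Finset.eq_of_subset_of_card_le hSlsub
    have := Finset.card_le_card hSlsub
    omega
  have : Sum.inl a ∈ Sl := by
    rw [hSleq]; simp
  exact Finset.mem_of_mem_filter _ this

/-- For `r > s ≥ 1` with `r ≥ 2s+1`, the graph `K_{s+1} ∨ T_{r-s-1}(n-s-1)` is
`B_{r,s}`-free. -/
theorem stmt8 (r s n : ℕ) (hs : 1 ≤ s) (hsr : s < r) (hr : 2 * s + 1 ≤ r) :
    BFree ((⊤ : SimpleGraph (Fin (s + 1))).join (turanGraph (n - s - 1) (r - s - 1)))
      r s := by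
  intro S T hSc hTc hcard
  have hsub : Finset.univ.image (Sum.inl : Fin (s+1) → Fin (s+1) ⊕ Fin (n-s-1)) ⊆ S ∩ T := by
    intro x hx
    simp only [Finset.mem_image, Finset.mem_univ, true_and] at hx
    obtain ⟨a, rfl⟩ := hx
    exact Finset.mem_inter.2 ⟨key_mem r s (n - s - 1) hs hr S hSc a, key_mem r s (n - s - 1) hs hr T hTc a⟩
  have h1 : (Finset.univ.image (Sum.inl : Fin (s+1) → Fin (s+1) ⊕ Fin (n-s-1))).card = s + 1 := by
    rw [Finset.card_image_of_injective _ Sum.inl_injective]; simp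
  have := Finset.card_le_card hsub
  omega
end

section
/- Let P = (a_1, …, a_t) be an s-sum-free partition of r (so a_1 ≥ … ≥ a_t > 0, Σa_i = r, and no subset of the a_i sums to s). Let G_P be the graph on vertex classes X_1, …, X_t of sizes within one of n/t, where each G_P[X_i] is a disjoint union of copies of K_{a_i} (assuming a_i divides |X_i|) and all edges between distinct classes are present. Then G_P is B_{r,s}-free. -/
open SimpleGraph

/-- The graph `G_P`: for each class `i : Fin t`, the class `X_i` consists of `b i`
disjoint copies of `K_{a i}` (a vertex is `(i, c, x)` with `c < b i` the copy index
and `x < a i` the position in the copy); all edges between distinct classes are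
present; within a class, two distinct vertices are adjacent iff they are in the
same copy. -/
def GP (t : ℕ) (a b : Fin t → ℕ) :
    SimpleGraph {p : Fin t × ℕ × ℕ // p.2.1 < b p.1 ∧ p.2.2 < a p.1} where
  Adj p q := p ≠ q ∧ (p.val.1 ≠ q.val.1 ∨ p.val.2.1 = q.val.2.1)
  symm := by
    constructor
    rintro p q ⟨h1, h2⟩
    exact ⟨h1.symm, by tauto⟩
  loopless := by constructor; rintro p ⟨h1, _⟩; exact h1 rfl

lemma clique_struct {t r : ℕ} {a b : Fin t → ℕ} (hpos : ∀ i, 0 < a i)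
    (hsum : ∑ i, a i = r)
    {S : Finset {p : Fin t × ℕ × ℕ // p.2.1 < b p.1 ∧ p.2.2 < a p.1}}
    (hS : (GP t a b).IsNClique r S) :
    ∃ c : Fin t → ℕ, (∀ p, p ∈ S ↔ p.val.2.1 = c p.val.1) ∧
      ∀ i, (S.filter (fun p => p.val.1 = i)).card = a i := by
  classical
  have hcopy : ∀ p ∈ S, ∀ q ∈ S, p.val.1 = q.val.1 → p.val.2.1 = q.val.2.1 := by
    intro p hp q hq hcls
    by_cases hpq : p = q
    · rw [hpq]
    · rcases hS.isClique hp hq hpq with ⟨-, h | h⟩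
      · exact absurd hcls h
      · exact h
  set F : Fin t → Finset _ := fun i => S.filter (fun p => p.val.1 = i) with hF
  have hinj : ∀ i, Set.InjOn
      (fun p : {p : Fin t × ℕ × ℕ // p.2.1 < b p.1 ∧ p.2.2 < a p.1} => p.val.2.2)
      (F i) := by
    intro i p hp q hq hx
    simp only [hF, Finset.coe_filter, Set.mem_setOf_eq] at hp hq
    have hcl : p.val.1 = q.val.1 := hp.2.trans hq.2.symm
    have hcp := hcopy p hp.1 q hq.1 hcl
    ext1
    exact Prod.ext hcl (Prod.ext hcp hx)
  have hmaps : ∀ i, ∀ p ∈ F i, p.val.2.2 ∈ Finset.range (a i) := by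
    intro i p hp
    rw [hF, Finset.mem_filter] at hp
    rw [Finset.mem_range, ← hp.2]
    exact p.2.2
  have hle : ∀ i, (F i).card ≤ a i := by
    intro i
    simpa using Finset.card_le_card_of_injOn _ (hmaps i) (hinj i)
  have hsum' : ∑ i, (F i).card = r := by
    rw [← hS.card_eq]
    exact (Finset.card_eq_sum_card_fiberwise (fun p _ => Finset.mem_univ p.val.1)).symm
  have hcard : ∀ i, (F i).card = a i := by
    have h := (Finset.sum_eq_sum_iff_of_le (fun i _ => hle i)).mp
      (by rw [hsum', hsum])
    exact fun i => h i (Finset.mem_univ i)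
  have hne : ∀ i, (F i).Nonempty := fun i =>
    Finset.card_pos.mp (by rw [hcard i]; exact hpos i)
  choose w hw using hne
  refine ⟨fun i => (w i).val.2.1, ?_, hcard⟩
  intro p
  constructor
  · intro hp
    have hwmem := Finset.mem_filter.mp (hw p.val.1)
    exact hcopy p hp _ hwmem.1 hwmem.2.symm
  · intro hp
    set i := p.val.1 with hi
    have himg : (F i).image (fun q => q.val.2.2) = Finset.range (a i) := by
      apply Finset.eq_of_subset_of_card_le
      · intro x hx
        rcases Finset.mem_image.mp hx with ⟨q, hq, rfl⟩
        exact hmaps i q hq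
      · rw [Finset.card_range, Finset.card_image_of_injOn (hinj i), hcard i]
    have hx : p.val.2.2 ∈ Finset.range (a i) := Finset.mem_range.mpr p.2.2
    rw [← himg] at hx
    rcases Finset.mem_image.mp hx with ⟨q, hq, hqx⟩
    have hq' := Finset.mem_filter.mp hq
    have hwmem := Finset.mem_filter.mp (hw i)
    have hq2 : q.val.2.1 = p.val.2.1 := by
      rw [hcopy q hq'.1 _ hwmem.1 (hq'.2.trans hwmem.2.symm)]
      exact hp.symm
    have hqp : q = p := by
      ext1
      exact Prod.ext hq'.2 (Prod.ext hq2 hqx)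
    rw [← hqp]
    exact hq'.1

/-- If `(a_1, …, a_t)` is an `s`-sum-free partition of `r` and each class of `G_P`
has size `⌊n/t⌋` or `⌊n/t⌋ + 1`, then `G_P` is `B_{r,s}`-free. -/
theorem stmt10 (r s t n : ℕ) (a : Fin t → ℕ) (ha : Antitone a)
    (hpos : ∀ i, 0 < a i) (hsum : ∑ i, a i = r)
    (hfree : ∀ I : Finset (Fin t), ∑ i ∈ I, a i ≠ s)
    (b : Fin t → ℕ) (hsize : ∀ i, b i * a i = n / t ∨ b i * a i = n / t + 1) :
    BFree (GP t a b) r s := by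
  classical
  intro S T hS hT
  obtain ⟨cS, hSmem, hScard⟩ := clique_struct hpos hsum hS
  obtain ⟨cT, hTmem, hTcard⟩ := clique_struct hpos hsum hT
  have hcount : (S ∩ T).card =
      ∑ i ∈ Finset.univ.filter (fun i => cS i = cT i), a i := by
    rw [Finset.card_eq_sum_card_fiberwise
      (fun p (_ : p ∈ S ∩ T) => Finset.mem_univ p.val.1), Finset.sum_filter]
    apply Finset.sum_congr rfl
    intro i _
    by_cases h : cS i = cT i
    · rw [if_pos h, ← hScard i]
      congr 1
      ext p
      simp only [Finset.mem_filter, Finset.mem_inter]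
      constructor
      · rintro ⟨⟨hpS, _⟩, hi⟩
        exact ⟨hpS, hi⟩
      · rintro ⟨hpS, hi⟩
        refine ⟨⟨hpS, ?_⟩, hi⟩
        rw [hTmem, (hSmem p).mp hpS, hi, h]
    · rw [if_neg h]
      rw [Finset.card_eq_zero, Finset.eq_empty_iff_forall_notMem]
      rintro p hp
      rw [Finset.mem_filter, Finset.mem_inter] at hp
      obtain ⟨⟨hpS, hpT⟩, hi⟩ := hp
      apply h
      calc cS i = cS p.val.1 := by rw [hi]
        _ = p.val.2.1 := ((hSmem p).mp hpS).symm
        _ = cT p.val.1 := (hTmem p).mp hpT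
        _ = cT i := by rw [hi]
  rw [hcount]
  exact hfree _
end

section
/- In a B_{4,2}-free graph G, every edge is contained in at most one copy of K_5; consequently the number of copies of K_5 in G is O(n²). -/
open SimpleGraph

lemma key_unique {V : Type*} [DecidableEq V] {G : SimpleGraph V} (hB : BFree G 4 2)
    {u v : V} (huv : G.Adj u v) {K1 K2 : Finset V}
    (h1 : G.IsNClique 5 K1) (h2 : G.IsNClique 5 K2)
    (hu1 : u ∈ K1) (hv1 : v ∈ K1) (hu2 : u ∈ K2) (hv2 : v ∈ K2) : K1 = K2 := by
  classical
  by_contra hne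
  have hune : u ≠ v := huv.ne
  set P : Finset V := {u, v} with hP
  have hPcard : P.card = 2 := by simp [hP, hune]
  have hP1 : P ⊆ K1 := by
    intro z hz; simp [hP] at hz; rcases hz with rfl | rfl <;> assumption
  have hP2 : P ⊆ K2 := by
    intro z hz; simp [hP] at hz; rcases hz with rfl | rfl <;> assumption
  set X := K1 \ P with hX
  set Y := K2 \ P with hY
  have hXcard : X.card = 3 := by rw [hX, Finset.card_sdiff_of_subset hP1, h1.2, hPcard]
  have hYcard : Y.card = 3 := by rw [hY, Finset.card_sdiff_of_subset hP2, h2.2, hPcard]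
  have hXK1 : X ⊆ K1 := Finset.sdiff_subset
  have hYK2 : Y ⊆ K2 := Finset.sdiff_subset
  have hK1eq : X ∪ P = K1 := Finset.sdiff_union_of_subset hP1
  have hK2eq : Y ∪ P = K2 := Finset.sdiff_union_of_subset hP2
  have hXY : X ≠ Y := by
    intro h; exact hne (by rw [← hK1eq, h, hK2eq])
  -- X \ Y and Y \ X are nonempty
  have hXYne : (X \ Y).Nonempty := by
    rw [Finset.sdiff_nonempty]
    intro hsub
    exact hXY (Finset.eq_of_subset_of_card_le hsub (by rw [hXcard, hYcard]))
  have hYXne : (Y \ X).Nonempty := by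
    rw [Finset.sdiff_nonempty]
    intro hsub
    exact hXY ((Finset.eq_of_subset_of_card_le hsub (by rw [hXcard, hYcard])).symm)
  obtain ⟨x, hx⟩ := hXYne
  obtain ⟨y, hy⟩ := hYXne
  have hxX : x ∈ X := (Finset.mem_sdiff.1 hx).1
  have hxnY : x ∉ Y := (Finset.mem_sdiff.1 hx).2
  have hyY : y ∈ Y := (Finset.mem_sdiff.1 hy).1
  have hynX : y ∉ X := (Finset.mem_sdiff.1 hy).2
  obtain ⟨b, hb⟩ : (Y.erase y).Nonempty := by
    rw [← Finset.card_pos, Finset.card_erase_of_mem hyY, hYcard]; norm_num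
  have hbY : b ∈ Y := Finset.mem_of_mem_erase hb
  have hby : b ≠ y := Finset.ne_of_mem_erase hb
  obtain ⟨a, ha⟩ : (X \ {x, b}).Nonempty := by
    rw [← Finset.card_pos]
    have h1' := Finset.card_le_card_sdiff_add_card (s := X) (t := ({x, b} : Finset V))
    have h2' : ({x, b} : Finset V).card ≤ 2 := Finset.card_insert_le _ _ |>.trans (by simp)
    omega
  have haX : a ∈ X := (Finset.mem_sdiff.1 ha).1
  have hax : a ≠ x := by
    have := (Finset.mem_sdiff.1 ha).2; simp at this; exact this.1
  have hab : a ≠ b := by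
    have := (Finset.mem_sdiff.1 ha).2; simp at this; exact this.2
  set A : Finset V := {x, a} with hA
  set B : Finset V := {y, b} with hB'
  have hAcard : A.card = 2 := by simp [hA, Ne.symm hax]
  have hBcard : B.card = 2 := by simp [hB', Ne.symm hby]
  have hAX : A ⊆ X := by
    intro z hz; simp [hA] at hz; rcases hz with rfl | rfl <;> assumption
  have hBY : B ⊆ Y := by
    intro z hz; simp [hB'] at hz; rcases hz with rfl | rfl <;> assumption
  have hAB : A ∩ B = ∅ := by
    ext z
    simp only [Finset.mem_inter, Finset.notMem_empty, iff_false, hA, hB',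
      Finset.mem_insert, Finset.mem_singleton]
    rintro ⟨hz1 | hz1, hz2 | hz2⟩ <;> subst hz1 <;> first
      | exact hxnY (hz2 ▸ hyY) | exact hxnY (hz2 ▸ hbY)
      | exact hynX haX | exact hab hz2 | (subst hz2; exact hynX haX)
  have hAP : Disjoint A P := by
    have : Disjoint X P := Finset.sdiff_disjoint
    exact this.mono_left hAX
  have hBP : Disjoint B P := by
    have : Disjoint Y P := Finset.sdiff_disjoint
    exact this.mono_left hBY
  set S : Finset V := P ∪ A with hS
  set T : Finset V := P ∪ B with hT
  have hSsub : S ⊆ K1 := by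
    rw [hS]; exact Finset.union_subset hP1 (hAX.trans hXK1)
  have hTsub : T ⊆ K2 := by
    rw [hT]; exact Finset.union_subset hP2 (hBY.trans hYK2)
  have hScard : S.card = 4 := by
    rw [hS, Finset.card_union_of_disjoint hAP.symm, hPcard, hAcard]
  have hTcard : T.card = 4 := by
    rw [hT, Finset.card_union_of_disjoint hBP.symm, hPcard, hBcard]
  have hSclique : G.IsNClique 4 S := ⟨h1.1.subset (by exact_mod_cast hSsub), hScard⟩
  have hTclique : G.IsNClique 4 T := ⟨h2.1.subset (by exact_mod_cast hTsub), hTcard⟩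
  have hST : S ∩ T = P := by
    rw [hS, hT]
    ext z
    simp only [Finset.mem_inter, Finset.mem_union]
    constructor
    · rintro ⟨h1' | h1', h2' | h2'⟩
      · exact h1'
      · exact h1'
      · exact h2'
      · exact absurd (Finset.mem_inter.2 ⟨h1', h2'⟩) (by rw [hAB]; simp)
    · exact fun h => ⟨Or.inl h, Or.inl h⟩
  exact hB S T hSclique hTclique (by rw [hST, hPcard])

/-- In a `B_{4,2}`-free graph, every edge lies in at most one copy of `K₅`;
consequently the number of copies of `K₅` in a `B_{4,2}`-free graph on `n`
vertices is `O(n²)`. -/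
theorem stmt14 :
    (∀ (V : Type*) [DecidableEq V] (G : SimpleGraph V), BFree G 4 2 →
      ∀ u v : V, G.Adj u v →
        Set.ncard {K : Finset V | G.IsNClique 5 K ∧ u ∈ K ∧ v ∈ K} ≤ 1) ∧
    ∃ C : ℝ, 0 < C ∧ ∀ (n : ℕ) (G : SimpleGraph (Fin n)), BFree G 4 2 →
      (cliqueCount G 5 : ℝ) ≤ C * (n : ℝ) ^ 2 := by
  constructor
  · intro V _ G hB u v huv
    have hss : {K : Finset V | G.IsNClique 5 K ∧ u ∈ K ∧ v ∈ K}.Subsingleton :=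
      fun K1 h1 K2 h2 =>
        key_unique hB huv h1.1 h2.1 h1.2.1 h1.2.2 h2.2.1 h2.2.2
    rw [Set.ncard_le_one hss.finite]
    exact fun a ha b hb => hss ha hb
  · refine ⟨4, by norm_num, fun n G hB => ?_⟩
    rcases Nat.eq_zero_or_pos n with rfl | hn
    · have : {S : Finset (Fin 0) | G.IsNClique 5 S} = ∅ := by
        ext S
        simp only [Set.mem_setOf_eq, Set.mem_empty_iff_false, iff_false]
        intro h
        have := h.2
        have hle : S.card ≤ 0 := by
          have := Finset.card_le_card (Finset.subset_univ S)
          simpa using this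
        omega
      simp [cliqueCount, this]
    · set s := {S : Finset (Fin n) | G.IsNClique 5 S} with hs
      set f : Finset (Fin n) → Option (Fin n) × Option (Fin n) :=
        fun K => ((K.sort (· ≤ ·)).head?, (K.sort (· ≤ ·)).tail.head?) with hf
      have hpick : ∀ K : Finset (Fin n), G.IsNClique 5 K →
          ∃ a b : Fin n, a ∈ K ∧ b ∈ K ∧ a ≠ b ∧
            f K = (some a, some b) := by
        intro K hK
        have hlen : (K.sort (· ≤ ·)).length = 5 := by
          rw [Finset.length_sort, hK.2]
        match hl : K.sort (· ≤ ·) with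
        | [] => rw [hl] at hlen; simp at hlen
        | [a] => rw [hl] at hlen; simp at hlen
        | a :: b :: tl =>
          refine ⟨a, b, ?_, ?_, ?_, ?_⟩
          · rw [← Finset.mem_sort (· ≤ ·), hl]; simp
          · rw [← Finset.mem_sort (· ≤ ·), hl]; simp
          · have hnd := Finset.sort_nodup K (· ≤ ·)
            rw [hl] at hnd
            intro h; subst h
            simp at hnd
          · rw [hf]; simp only [hl]; rfl
      have hinj : Set.InjOn f s := by
        intro K1 hK1 K2 hK2 hfeq
        obtain ⟨a1, b1, ha1, hb1, hne1, hfa1⟩ := hpick K1 hK1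
        obtain ⟨a2, b2, ha2, hb2, hne2, hfa2⟩ := hpick K2 hK2
        rw [hfa1, hfa2] at hfeq
        have hae : a1 = a2 := by simpa using congrArg Prod.fst hfeq
        have hbe : b1 = b2 := by simpa using congrArg Prod.snd hfeq
        subst hae; subst hbe
        have hadj : G.Adj a1 b1 := hK1.1 ha1 hb1 hne1
        exact key_unique hB hadj hK1 hK2 ha1 hb1 ha2 hb2
      have h1 : s.ncard = (f '' s).ncard := (Set.ncard_image_of_injOn hinj).symm
      have h2 : (f '' s).ncard ≤ Nat.card (Option (Fin n) × Option (Fin n)) := by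
        rw [← Set.ncard_univ]
        exact Set.ncard_le_ncard (Set.subset_univ _) Set.finite_univ
      have h3 : Nat.card (Option (Fin n) × Option (Fin n)) = (n + 1) * (n + 1) := by
        simp [Nat.card_eq_fintype_card]
      have hb : cliqueCount G 5 ≤ (n + 1) * (n + 1) := by
        rw [cliqueCount, ← hs, h1]; omega
      have hcast : (cliqueCount G 5 : ℝ) ≤ ((n + 1) * (n + 1) : ℕ) := by
        exact_mod_cast hb
      refine hcast.trans ?_
      have hn1 : (1 : ℝ) ≤ (n : ℝ) := by exact_mod_cast hn
      push_cast
      nlinarith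
end
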